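/- arXiv:2003.09861 — 7 statements merged into one kernel-verified Lean document; each statement's English description precedes it below -/
import Mathlib

section
/- The SIDARTHE system is positive: if all eight state variables are nonnegative at time 0, then they remain nonnegative for all t ≥ 0. -/
open Set Filter Topology

lemma sid_key_term (c M g s X : ℝ) (hc : 0 ≤ c) (hg : 0 ≤ g) (hM : 0 ≤ M)
    (hsM : s ≤ M) (hsg : -s ≤ g) (hXM : X ≤ M) (hXg : -X ≤ g) :
    -(c * s * X) ≤ c * M * g := by
  rcases le_or_gt 0 s with hs | hs
  · linarith [mul_nonneg (mul_nonneg hc hs) (by linarith : (0:ℝ) ≤ g + X),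
      mul_nonneg (mul_nonneg hc hg) (by linarith : (0:ℝ) ≤ M - s)]
  · rcases le_or_gt 0 X with hX | hX
    · linarith [mul_nonneg (mul_nonneg hc hX) (by linarith : (0:ℝ) ≤ g + s),
        mul_nonneg (mul_nonneg hc hg) (by linarith : (0:ℝ) ≤ M - X)]
    · linarith [mul_nonneg (mul_nonneg hc (by linarith : (0:ℝ) ≤ -s)) (by linarith : (0:ℝ) ≤ -X),
        mul_nonneg (mul_nonneg hc hM) hg]

/-- Grönwall-type lemma: if each of finitely many differentiable functions has, whenever it is
the (pointwise) maximum of the family, derivative bounded by `K` times that maximum, and all start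
nonpositive, they all stay nonpositive on `[0, b]`. -/
lemma sid_sup_nonpos {n : ℕ} (x x' : Fin (n + 1) → ℝ → ℝ)
    (hx : ∀ i t, HasDerivAt (x i) (x' i t) t)
    {K b : ℝ}
    (hbound : ∀ t, t ∈ Set.Ico 0 b → ∀ i, (∀ j, x j t ≤ x i t) → x' i t ≤ K * x i t)
    (h0 : ∀ i, x i 0 ≤ 0) :
    ∀ t ∈ Set.Icc 0 b, ∀ i, x i t ≤ 0 := by
  have hne : (Finset.univ : Finset (Fin (n + 1))).Nonempty := ⟨0, Finset.mem_univ 0⟩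
  set f : ℝ → ℝ := fun t => Finset.univ.sup' hne (fun i => x i t) with hf
  have hcx : ∀ i, Continuous (x i) := fun i =>
    continuous_iff_continuousAt.2 fun t => (hx i t).continuousAt
  have hfc : Continuous f := Continuous.finset_sup'_apply hne fun i _ => hcx i
  have hle : ∀ j t, x j t ≤ f t := fun j t => Finset.le_sup' (fun i => x i t) (Finset.mem_univ j)
  have hmem : ∀ t, ∃ j, f t = x j t := by
    intro t
    obtain ⟨j, -, hj⟩ := Finset.exists_mem_eq_sup' hne (fun i => x i t)
    exact ⟨j, hj⟩
  have key : ∀ t ∈ Set.Icc 0 b, f t ≤ gronwallBound 0 K 0 (t - 0) := by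
    apply le_gronwallBound_of_liminf_deriv_right_le (f' := fun t => K * f t)
      hfc.continuousOn
    · intro t ht r hr
      -- find an index achieving the sup frequently to the right of `t`
      have hfreq : ∃ j, ∃ᶠ z in 𝓝[>] t, f z = x j z := by
        by_contra hcon
        push_neg at hcon
        have hev : ∀ᶠ z in 𝓝[>] t, ∀ j, ¬ f z = x j z :=
          eventually_all.2 fun j => (hcon j)
        obtain ⟨z, hz⟩ := hev.exists
        obtain ⟨j, hj⟩ := hmem z
        exact hz j hj
      obtain ⟨j, hj⟩ := hfreq
      have hnb : (𝓝[>] t ⊓ 𝓟 {z | f z = x j z}).NeBot := frequently_iff_neBot.1 hj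
      have hjt : f t = x j t := by
        have hl : 𝓝[>] t ⊓ 𝓟 {z | f z = x j z} ≤ 𝓝 t :=
          le_trans inf_le_left nhdsWithin_le_nhds
        have h1 : Tendsto f (𝓝[>] t ⊓ 𝓟 {z | f z = x j z}) (𝓝 (f t)) :=
          (hfc.tendsto t).mono_left hl
        have h2 : Tendsto (x j) (𝓝[>] t ⊓ 𝓟 {z | f z = x j z}) (𝓝 (x j t)) :=
          ((hcx j).tendsto t).mono_left hl
        have h3 : f =ᶠ[𝓝[>] t ⊓ 𝓟 {z | f z = x j z}] x j :=
          eventually_inf_principal.2 (Eventually.of_forall fun z hz => hz)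
        exact tendsto_nhds_unique (h1.congr' h3) h2
      have hdb : x' j t ≤ K * f t := by
        have := hbound t ht j (fun k => hjt ▸ hle k t)
        rwa [← hjt] at this
      have hslope : Tendsto (slope (x j) t) (𝓝[>] t) (𝓝 (x' j t)) :=
        (hasDerivAt_iff_tendsto_slope.1 (hx j t)).mono_left
          (nhdsWithin_mono t fun z hz => ne_of_gt hz)
      have hev : ∀ᶠ z in 𝓝[>] t, slope (x j) t z < r :=
        hslope.eventually_lt_const (lt_of_le_of_lt hdb hr)
      refine hj.mp (hev.mono fun z hz hfz => ?_)
      have : (z - t)⁻¹ * (f z - f t) = slope (x j) t z := by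
        rw [hfz, hjt, slope_def_field, div_eq_inv_mul]
      rw [this]; exact hz
    · exact Finset.sup'_le hne _ fun i _ => h0 i
    · intro t _; simp
  intro t ht i
  have := key t ht
  rw [gronwallBound_ε0_δ0] at this
  exact le_trans (hle i t) this

/-- The SIDARTHE system is positive: nonnegative initial conditions give
nonnegative solutions for all t ≥ 0. -/
theorem sidarthe_positivity
    (α β γ δ ε ζ lam η ρ θ μ κ ν ξ σ τ : ℝ)
    (hα : 0 < α) (hβ : 0 < β) (hγ : 0 < γ) (hδ : 0 < δ) (hε : 0 < ε)
    (hζ : 0 < ζ) (hlam : 0 < lam) (hη : 0 < η) (hρ : 0 < ρ) (hθ : 0 < θ)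
    (hμ : 0 < μ) (hκ : 0 < κ) (hν : 0 < ν) (hξ : 0 < ξ) (hσ : 0 < σ)
    (hτ : 0 < τ)
    (S I D A R T H E : ℝ → ℝ)
    (hS : ∀ t, HasDerivAt S (-(S t) * (α * I t + β * D t + γ * A t + δ * R t)) t)
    (hI : ∀ t, HasDerivAt I (S t * (α * I t + β * D t + γ * A t + δ * R t) - (ε + ζ + lam) * I t) t)
    (hD : ∀ t, HasDerivAt D (ε * I t - (η + ρ) * D t) t)
    (hA : ∀ t, HasDerivAt A (ζ * I t - (θ + μ + κ) * A t) t)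
    (hR : ∀ t, HasDerivAt R (η * D t + θ * A t - (ν + ξ) * R t) t)
    (hT : ∀ t, HasDerivAt T (μ * A t + ν * R t - (σ + τ) * T t) t)
    (hH : ∀ t, HasDerivAt H (lam * I t + ρ * D t + κ * A t + ξ * R t + σ * T t) t)
    (hE : ∀ t, HasDerivAt E (τ * T t) t)
    (h0 : 0 ≤ S 0 ∧ 0 ≤ I 0 ∧ 0 ≤ D 0 ∧ 0 ≤ A 0 ∧ 0 ≤ R 0 ∧ 0 ≤ T 0 ∧ 0 ≤ H 0 ∧ 0 ≤ E 0) :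
    ∀ t, 0 ≤ t →
      0 ≤ S t ∧ 0 ≤ I t ∧ 0 ≤ D t ∧ 0 ≤ A t ∧ 0 ≤ R t ∧ 0 ≤ T t ∧ 0 ≤ H t ∧ 0 ≤ E t := by
  obtain ⟨hS0, hI0, hD0, hA0, hR0, hT0, hH0, hE0⟩ := h0
  intro t ht
  -- continuity
  have cS : Continuous S := continuous_iff_continuousAt.2 fun u => (hS u).continuousAt
  have cI : Continuous I := continuous_iff_continuousAt.2 fun u => (hI u).continuousAt
  have cD : Continuous D := continuous_iff_continuousAt.2 fun u => (hD u).continuousAt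
  have cA : Continuous A := continuous_iff_continuousAt.2 fun u => (hA u).continuousAt
  have cR : Continuous R := continuous_iff_continuousAt.2 fun u => (hR u).continuousAt
  -- bounds on [0, t]
  obtain ⟨MS, hMS⟩ := (isCompact_Icc : IsCompact (Set.Icc (0:ℝ) t)).exists_bound_of_continuousOn
    cS.continuousOn
  obtain ⟨MI, hMI⟩ := (isCompact_Icc : IsCompact (Set.Icc (0:ℝ) t)).exists_bound_of_continuousOn
    cI.continuousOn
  obtain ⟨MD, hMD⟩ := (isCompact_Icc : IsCompact (Set.Icc (0:ℝ) t)).exists_bound_of_continuousOn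
    cD.continuousOn
  obtain ⟨MA, hMA⟩ := (isCompact_Icc : IsCompact (Set.Icc (0:ℝ) t)).exists_bound_of_continuousOn
    cA.continuousOn
  obtain ⟨MR, hMR⟩ := (isCompact_Icc : IsCompact (Set.Icc (0:ℝ) t)).exists_bound_of_continuousOn
    cR.continuousOn
  set M : ℝ := max 0 (max MS (max MI (max MD (max MA MR)))) with hMdef
  have hM0 : 0 ≤ M := le_max_left _ _
  have habs : ∀ u ∈ Set.Icc (0:ℝ) t,
      |S u| ≤ M ∧ |I u| ≤ M ∧ |D u| ≤ M ∧ |A u| ≤ M ∧ |R u| ≤ M := by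
    intro u hu
    have h1 := hMS u hu; have h2 := hMI u hu; have h3 := hMD u hu
    have h4 := hMA u hu; have h5 := hMR u hu
    rw [Real.norm_eq_abs] at h1 h2 h3 h4 h5
    exact ⟨h1.trans (by rw [hMdef]; simp [le_max_iff]),
      h2.trans (by rw [hMdef]; simp [le_max_iff]),
      h3.trans (by rw [hMdef]; simp [le_max_iff]),
      h4.trans (by rw [hMdef]; simp [le_max_iff]),
      h5.trans (by rw [hMdef]; simp [le_max_iff])⟩
  set K : ℝ := (α + β + γ + δ) * M + (ε + ζ + lam + η + ρ + θ + μ + κ + ν + ξ + σ + τ)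
    with hKdef
  -- the family of negated states (plus the constant 0)
  set x : Fin 9 → ℝ → ℝ := fun i u => match i with
    | 0 => 0 | 1 => -S u | 2 => -I u | 3 => -D u | 4 => -A u
    | 5 => -R u | 6 => -T u | 7 => -H u | 8 => -E u with hxdef
  set x' : Fin 9 → ℝ → ℝ := fun i u => match i with
    | 0 => 0
    | 1 => -(-(S u) * (α * I u + β * D u + γ * A u + δ * R u))
    | 2 => -(S u * (α * I u + β * D u + γ * A u + δ * R u) - (ε + ζ + lam) * I u)
    | 3 => -(ε * I u - (η + ρ) * D u)
    | 4 => -(ζ * I u - (θ + μ + κ) * A u)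
    | 5 => -(η * D u + θ * A u - (ν + ξ) * R u)
    | 6 => -(μ * A u + ν * R u - (σ + τ) * T u)
    | 7 => -(lam * I u + ρ * D u + κ * A u + ξ * R u + σ * T u)
    | 8 => -(τ * T u) with hx'def
  have hx : ∀ i u, HasDerivAt (x i) (x' i u) u := by
    intro i u
    fin_cases i
    · exact hasDerivAt_const u 0
    · exact (hS u).neg
    · exact (hI u).neg
    · exact (hD u).neg
    · exact (hA u).neg
    · exact (hR u).neg
    · exact (hT u).neg
    · exact (hH u).neg
    · exact (hE u).neg
  have h0' : ∀ i, x i 0 ≤ 0 := by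
    intro i
    fin_cases i
    · exact le_refl 0
    · show -S 0 ≤ 0; linarith
    · show -I 0 ≤ 0; linarith
    · show -D 0 ≤ 0; linarith
    · show -A 0 ≤ 0; linarith
    · show -R 0 ≤ 0; linarith
    · show -T 0 ≤ 0; linarith
    · show -H 0 ≤ 0; linarith
    · show -E 0 ≤ 0; linarith
  have hbound : ∀ u, u ∈ Set.Ico 0 t → ∀ i, (∀ j, x j u ≤ x i u) → x' i u ≤ K * x i u := by
    intro u hu i hi
    have huI : u ∈ Set.Icc (0:ℝ) t := ⟨hu.1, hu.2.le⟩
    obtain ⟨haS, haI, haD, haA, haR⟩ := habs u huI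
    fin_cases i
    -- case 0 : constant zero
    · show (0:ℝ) ≤ K * 0
      simp
    -- case 1 : -S is maximal
    · have b0 : (0:ℝ) ≤ -S u := hi 0
      have b2 : -I u ≤ -S u := hi 2
      have b3 : -D u ≤ -S u := hi 3
      have b4 : -A u ≤ -S u := hi 4
      have b5 : -R u ≤ -S u := hi 5
      show -(-(S u) * (α * I u + β * D u + γ * A u + δ * R u)) ≤ K * -S u
      have hgM : -S u ≤ M := (neg_le_abs _).trans haS
      have k1 := sid_key_term α M (-S u) (-S u) (I u) hα.le b0 hM0 hgM (by linarith)
        ((le_abs_self _).trans haI) b2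
      have k2 := sid_key_term β M (-S u) (-S u) (D u) hβ.le b0 hM0 hgM (by linarith)
        ((le_abs_self _).trans haD) b3
      have k3 := sid_key_term γ M (-S u) (-S u) (A u) hγ.le b0 hM0 hgM (by linarith)
        ((le_abs_self _).trans haA) b4
      have k4 := sid_key_term δ M (-S u) (-S u) (R u) hδ.le b0 hM0 hgM (by linarith)
        ((le_abs_self _).trans haR) b5
      have hrest : 0 ≤ (ε + ζ + lam + η + ρ + θ + μ + κ + ν + ξ + σ + τ) * (-S u) :=
        mul_nonneg (by positivity) b0
      rw [hKdef]; linarith [k1, k2, k3, k4, hrest]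
    -- case 2 : -I is maximal
    · have b0 : (0:ℝ) ≤ -I u := hi 0
      have b1 : -S u ≤ -I u := hi 1
      have b3 : -D u ≤ -I u := hi 3
      have b4 : -A u ≤ -I u := hi 4
      have b5 : -R u ≤ -I u := hi 5
      show -(S u * (α * I u + β * D u + γ * A u + δ * R u) - (ε + ζ + lam) * I u) ≤ K * -I u
      have k1 := sid_key_term α M (-I u) (S u) (I u) hα.le b0 hM0
        ((le_abs_self _).trans haS) b1 ((le_abs_self _).trans haI) (by linarith)
      have k2 := sid_key_term β M (-I u) (S u) (D u) hβ.le b0 hM0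
        ((le_abs_self _).trans haS) b1 ((le_abs_self _).trans haD) b3
      have k3 := sid_key_term γ M (-I u) (S u) (A u) hγ.le b0 hM0
        ((le_abs_self _).trans haS) b1 ((le_abs_self _).trans haA) b4
      have k4 := sid_key_term δ M (-I u) (S u) (R u) hδ.le b0 hM0
        ((le_abs_self _).trans haS) b1 ((le_abs_self _).trans haR) b5
      have hrest : 0 ≤ (η + ρ + θ + μ + κ + ν + ξ + σ + τ) * (-I u) :=
        mul_nonneg (by positivity) b0
      have hself : 0 ≤ (ε + ζ + lam) * (-I u) := mul_nonneg (by positivity) b0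
      rw [hKdef]; linarith [k1, k2, k3, k4, hrest, hself]
    -- case 3 : -D is maximal
    · have b0 : (0:ℝ) ≤ -D u := hi 0
      have b2 : -I u ≤ -D u := hi 2
      show -(ε * I u - (η + ρ) * D u) ≤ K * -D u
      have h1 : ε * (-I u) ≤ ε * (-D u) := mul_le_mul_of_nonneg_left b2 hε.le
      have hrest : 0 ≤ ((α + β + γ + δ) * M + (ζ + lam + η + ρ + θ + μ + κ + ν + ξ + σ + τ))
          * (-D u) := mul_nonneg (by positivity) b0
      have hself : 0 ≤ (η + ρ) * (-D u) := mul_nonneg (by positivity) b0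
      rw [hKdef]; linarith [h1, hrest, hself]
    -- case 4 : -A is maximal
    · have b0 : (0:ℝ) ≤ -A u := hi 0
      have b2 : -I u ≤ -A u := hi 2
      show -(ζ * I u - (θ + μ + κ) * A u) ≤ K * -A u
      have h1 : ζ * (-I u) ≤ ζ * (-A u) := mul_le_mul_of_nonneg_left b2 hζ.le
      have hrest : 0 ≤ ((α + β + γ + δ) * M + (ε + lam + η + ρ + θ + μ + κ + ν + ξ + σ + τ))
          * (-A u) := mul_nonneg (by positivity) b0
      have hself : 0 ≤ (θ + μ + κ) * (-A u) := mul_nonneg (by positivity) b0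
      rw [hKdef]; linarith [h1, hrest, hself]
    -- case 5 : -R is maximal
    · have b0 : (0:ℝ) ≤ -R u := hi 0
      have b3 : -D u ≤ -R u := hi 3
      have b4 : -A u ≤ -R u := hi 4
      show -(η * D u + θ * A u - (ν + ξ) * R u) ≤ K * -R u
      have h1 : η * (-D u) ≤ η * (-R u) := mul_le_mul_of_nonneg_left b3 hη.le
      have h2 : θ * (-A u) ≤ θ * (-R u) := mul_le_mul_of_nonneg_left b4 hθ.le
      have hrest : 0 ≤ ((α + β + γ + δ) * M + (ε + ζ + lam + ρ + μ + κ + ν + ξ + σ + τ))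
          * (-R u) := mul_nonneg (by positivity) b0
      have hself : 0 ≤ (ν + ξ) * (-R u) := mul_nonneg (by positivity) b0
      rw [hKdef]; linarith [h1, h2, hrest, hself]
    -- case 6 : -T is maximal
    · have b0 : (0:ℝ) ≤ -T u := hi 0
      have b4 : -A u ≤ -T u := hi 4
      have b5 : -R u ≤ -T u := hi 5
      show -(μ * A u + ν * R u - (σ + τ) * T u) ≤ K * -T u
      have h1 : μ * (-A u) ≤ μ * (-T u) := mul_le_mul_of_nonneg_left b4 hμ.le
      have h2 : ν * (-R u) ≤ ν * (-T u) := mul_le_mul_of_nonneg_left b5 hν.le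
      have hrest : 0 ≤ ((α + β + γ + δ) * M + (ε + ζ + lam + η + ρ + θ + κ + ξ + σ + τ))
          * (-T u) := mul_nonneg (by positivity) b0
      have hself : 0 ≤ (σ + τ) * (-T u) := mul_nonneg (by positivity) b0
      rw [hKdef]; linarith [h1, h2, hrest, hself]
    -- case 7 : -H is maximal
    · have b0 : (0:ℝ) ≤ -H u := hi 0
      have b2 : -I u ≤ -H u := hi 2
      have b3 : -D u ≤ -H u := hi 3
      have b4 : -A u ≤ -H u := hi 4
      have b5 : -R u ≤ -H u := hi 5
      have b6 : -T u ≤ -H u := hi 6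
      show -(lam * I u + ρ * D u + κ * A u + ξ * R u + σ * T u) ≤ K * -H u
      have h1 : lam * (-I u) ≤ lam * (-H u) := mul_le_mul_of_nonneg_left b2 hlam.le
      have h2 : ρ * (-D u) ≤ ρ * (-H u) := mul_le_mul_of_nonneg_left b3 hρ.le
      have h3 : κ * (-A u) ≤ κ * (-H u) := mul_le_mul_of_nonneg_left b4 hκ.le
      have h4 : ξ * (-R u) ≤ ξ * (-H u) := mul_le_mul_of_nonneg_left b5 hξ.le
      have h5 : σ * (-T u) ≤ σ * (-H u) := mul_le_mul_of_nonneg_left b6 hσ.le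
      have hrest : 0 ≤ ((α + β + γ + δ) * M + (ε + ζ + η + θ + μ + ν + τ))
          * (-H u) := mul_nonneg (by positivity) b0
      rw [hKdef]; linarith [h1, h2, h3, h4, h5, hrest]
    -- case 8 : -E is maximal
    · have b0 : (0:ℝ) ≤ -E u := hi 0
      have b6 : -T u ≤ -E u := hi 6
      show -(τ * T u) ≤ K * -E u
      have h1 : τ * (-T u) ≤ τ * (-E u) := mul_le_mul_of_nonneg_left b6 hτ.le
      have hrest : 0 ≤ ((α + β + γ + δ) * M + (ε + ζ + lam + η + ρ + θ + μ + κ + ν + ξ + σ))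
          * (-E u) := mul_nonneg (by positivity) b0
      rw [hKdef]; linarith [h1, hrest]
  have hmain := sid_sup_nonpos x x' hx hbound h0' t ⟨ht, le_refl t⟩
  have m1 : -S t ≤ 0 := hmain 1
  have m2 : -I t ≤ 0 := hmain 2
  have m3 : -D t ≤ 0 := hmain 3
  have m4 : -A t ≤ 0 := hmain 4
  have m5 : -R t ≤ 0 := hmain 5
  have m6 : -T t ≤ 0 := hmain 6
  have m7 : -H t ≤ 0 := hmain 7
  have m8 : -E t ≤ 0 := hmain 8
  exact ⟨by linarith, by linarith, by linarith, by linarith, by linarith, by linarith,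
    by linarith, by linarith⟩
end

section
/- A point (S̄, Ī, D̄, Ā, R̄, T̄, H̄, Ē) with all coordinates nonnegative is an equilibrium of the SIDARTHE system if and only if Ī = D̄ = Ā = R̄ = T̄ = 0, or S̄ = Ī = D̄ = Ā = R̄ = T̄ = 0 (i.e., every equilibrium has I = D = A = R = T = 0). -/
/-- A nonnegative point is an equilibrium of the SIDARTHE system iff
I = D = A = R = T = 0. -/
theorem sidarthe_equilibria
    (α β γ δ ε ζ lam η ρ θ μ κ ν ξ σ τ : ℝ)
    (hα : 0 < α) (hβ : 0 < β) (hγ : 0 < γ) (hδ : 0 < δ) (hε : 0 < ε)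
    (hζ : 0 < ζ) (hlam : 0 < lam) (hη : 0 < η) (hρ : 0 < ρ) (hθ : 0 < θ)
    (hμ : 0 < μ) (hκ : 0 < κ) (hν : 0 < ν) (hξ : 0 < ξ) (hσ : 0 < σ)
    (hτ : 0 < τ)
    (S I D A R T H E : ℝ)
    (hS : 0 ≤ S) (hI : 0 ≤ I) (hD : 0 ≤ D) (hA : 0 ≤ A) (hR : 0 ≤ R)
    (hT : 0 ≤ T) (hH : 0 ≤ H) (hE : 0 ≤ E) :
    (-S * (α * I + β * D + γ * A + δ * R) = 0 ∧
     S * (α * I + β * D + γ * A + δ * R) - (ε + ζ + lam) * I = 0 ∧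
     ε * I - (η + ρ) * D = 0 ∧
     ζ * I - (θ + μ + κ) * A = 0 ∧
     η * D + θ * A - (ν + ξ) * R = 0 ∧
     μ * A + ν * R - (σ + τ) * T = 0 ∧
     lam * I + ρ * D + κ * A + ξ * R + σ * T = 0 ∧
     τ * T = 0)
    ↔ (I = 0 ∧ D = 0 ∧ A = 0 ∧ R = 0 ∧ T = 0) := by
  constructor
  · rintro ⟨-, -, -, -, -, -, h7, -⟩
    have t1 : 0 ≤ lam * I := mul_nonneg hlam.le hI
    have t2 : 0 ≤ ρ * D := mul_nonneg hρ.le hD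
    have t3 : 0 ≤ κ * A := mul_nonneg hκ.le hA
    have t4 : 0 ≤ ξ * R := mul_nonneg hξ.le hR
    have t5 : 0 ≤ σ * T := mul_nonneg hσ.le hT
    have hI0 : lam * I = 0 := by linarith
    have hD0 : ρ * D = 0 := by linarith
    have hA0 : κ * A = 0 := by linarith
    have hR0 : ξ * R = 0 := by linarith
    have hT0 : σ * T = 0 := by linarith
    exact ⟨by rcases mul_eq_zero.1 hI0 with h | h; exact absurd h hlam.ne'; exact h,
      by rcases mul_eq_zero.1 hD0 with h | h; exact absurd h hρ.ne'; exact h,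
      by rcases mul_eq_zero.1 hA0 with h | h; exact absurd h hκ.ne'; exact h,
      by rcases mul_eq_zero.1 hR0 with h | h; exact absurd h hξ.ne'; exact h,
      by rcases mul_eq_zero.1 hT0 with h | h; exact absurd h hσ.ne'; exact h⟩
  · rintro ⟨rfl, rfl, rfl, rfl, rfl⟩
    norm_num
end

section
/- The matrix F + S̄·b·cᵀ (the closed-loop IDART matrix with constant feedback gain S̄ ≥ 0) is Hurwitz (all eigenvalues have negative real part) if and only if S̄ < S̄* := r₁r₂r₃r₄ / (α r₂r₃r₄ + βε r₃r₄ + γζ r₂r₄ + δ(ηε r₃ + ζθ r₂)). -/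
open Matrix in
private lemma idart_aux_contra (α β γ δ ε ζ η θ r₁ r₂ r₃ r₄ Sbar a₁ a₂ a₃ a₄ : ℝ)
    (hα : 0 < α) (hβ : 0 < β) (hγ : 0 < γ) (hδ : 0 < δ) (hε : 0 < ε)
    (hζ : 0 < ζ) (hη : 0 < η) (hθ : 0 < θ)
    (hr1 : 0 < r₁) (hr2 : 0 < r₂) (hr3 : 0 < r₃) (hr4 : 0 < r₄)
    (hS : 0 ≤ Sbar)
    (h1 : r₁ ≤ a₁) (h2 : r₂ ≤ a₂) (h3 : r₃ ≤ a₃) (h4 : r₄ ≤ a₄)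
    (hkey : a₁ * a₂ * a₃ * a₄ ≤ Sbar * (α * (a₂ * a₃ * a₄) + β * ε * (a₃ * a₄)
      + γ * ζ * (a₂ * a₄) + δ * (ε * η * a₃ + ζ * θ * a₂)))
    (hSD : Sbar * (α * r₂ * r₃ * r₄ + β * ε * r₃ * r₄ + γ * ζ * r₂ * r₄
      + δ * (η * ε * r₃ + ζ * θ * r₂)) < r₁ * r₂ * r₃ * r₄) : False := by
  have ha1 : 0 < a₁ := lt_of_lt_of_le hr1 h1
  have ha2 : 0 < a₂ := lt_of_lt_of_le hr2 h2
  have ha3 : 0 < a₃ := lt_of_lt_of_le hr3 h3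
  have ha4 : 0 < a₄ := lt_of_lt_of_le hr4 h4
  -- termwise inequalities
  have m1 : r₁ * (a₂ * a₃ * a₄) ≤ a₁ * (a₂ * a₃ * a₄) :=
    mul_le_mul_of_nonneg_right h1 (by positivity)
  have m2 : (r₁ * r₂) * (a₃ * a₄) ≤ (a₁ * a₂) * (a₃ * a₄) :=
    mul_le_mul_of_nonneg_right (mul_le_mul h1 h2 hr2.le ha1.le) (by positivity)
  have m3 : (r₁ * r₃) * (a₂ * a₄) ≤ (a₁ * a₃) * (a₂ * a₄) :=
    mul_le_mul_of_nonneg_right (mul_le_mul h1 h3 hr3.le ha1.le) (by positivity)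
  have m4 : (r₁ * r₂ * r₄) * a₃ ≤ (a₁ * a₂ * a₄) * a₃ :=
    mul_le_mul_of_nonneg_right
      (mul_le_mul (mul_le_mul h1 h2 hr2.le ha1.le) h4 hr4.le (by positivity)) ha3.le
  have m5 : (r₁ * r₃ * r₄) * a₂ ≤ (a₁ * a₃ * a₄) * a₂ :=
    mul_le_mul_of_nonneg_right
      (mul_le_mul (mul_le_mul h1 h3 hr3.le ha1.le) h4 hr4.le (by positivity)) ha2.le
  have g1 := mul_le_mul_of_nonneg_left m1 (by positivity : (0:ℝ) ≤ α * r₂ * r₃ * r₄)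
  have g2 := mul_le_mul_of_nonneg_left m2 (by positivity : (0:ℝ) ≤ β * ε * r₃ * r₄)
  have g3 := mul_le_mul_of_nonneg_left m3 (by positivity : (0:ℝ) ≤ γ * ζ * r₂ * r₄)
  have g4 := mul_le_mul_of_nonneg_left m4 (by positivity : (0:ℝ) ≤ δ * (η * ε) * r₃)
  have g5 := mul_le_mul_of_nonneg_left m5 (by positivity : (0:ℝ) ≤ δ * (ζ * θ) * r₂)
  have hRS : (r₁ * r₂ * r₃ * r₄) * (α * (a₂ * a₃ * a₄) + β * ε * (a₃ * a₄)
      + γ * ζ * (a₂ * a₄) + δ * (ε * η * a₃ + ζ * θ * a₂))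
      ≤ (α * r₂ * r₃ * r₄ + β * ε * r₃ * r₄ + γ * ζ * r₂ * r₄
        + δ * (η * ε * r₃ + ζ * θ * r₂)) * (a₁ * a₂ * a₃ * a₄) := by linarith [g1, g2, g3, g4, g5]
  have f1 := mul_le_mul_of_nonneg_left hkey (by positivity : (0:ℝ) ≤ r₁ * r₂ * r₃ * r₄)
  have f2 := mul_le_mul_of_nonneg_left hRS hS
  have f3 := mul_lt_mul_of_pos_right hSD (by positivity : (0:ℝ) < a₁ * a₂ * a₃ * a₄)
  linarith [f1, f2, f3]

set_option maxHeartbeats 1000000 in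
open Matrix in
/-- The closed-loop IDART matrix F + S̄·b·cᵀ is Hurwitz iff S̄ < S̄*. -/
theorem idart_closed_loop_hurwitz_iff
    (α β γ δ ε ζ lam η ρ θ μ κ ν ξ σ τ : ℝ)
    (hα : 0 < α) (hβ : 0 < β) (hγ : 0 < γ) (hδ : 0 < δ) (hε : 0 < ε)
    (hζ : 0 < ζ) (hlam : 0 < lam) (hη : 0 < η) (hρ : 0 < ρ) (hθ : 0 < θ)
    (hμ : 0 < μ) (hκ : 0 < κ) (hν : 0 < ν) (hξ : 0 < ξ) (hσ : 0 < σ)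
    (hτ : 0 < τ)
    (r₁ r₂ r₃ r₄ r₅ : ℝ)
    (hr₁ : r₁ = ε + ζ + lam) (hr₂ : r₂ = η + ρ) (hr₃ : r₃ = θ + μ + κ)
    (hr₄ : r₄ = ν + ξ) (hr₅ : r₅ = σ + τ)
    (F : Matrix (Fin 5) (Fin 5) ℝ)
    (hF : F = !![-r₁, 0, 0, 0, 0;
                 ε, -r₂, 0, 0, 0;
                 ζ, 0, -r₃, 0, 0;
                 0, η, θ, -r₄, 0;
                 0, 0, μ, ν, -r₅])
    (b c : Fin 5 → ℝ)
    (hb : b = ![1, 0, 0, 0, 0]) (hc : c = ![α, β, γ, δ, 0])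
    (Sbar : ℝ) (hSbar : 0 ≤ Sbar) :
    (∀ z ∈ spectrum ℂ ((F + Sbar • vecMulVec b c).map (Complex.ofReal)), z.re < 0)
    ↔ Sbar < r₁ * r₂ * r₃ * r₄ /
        (α * r₂ * r₃ * r₄ + β * ε * r₃ * r₄ + γ * ζ * r₂ * r₄
          + δ * (η * ε * r₃ + ζ * θ * r₂)) := by
  have hr1p : 0 < r₁ := by rw [hr₁]; linarith
  have hr2p : 0 < r₂ := by rw [hr₂]; linarith
  have hr3p : 0 < r₃ := by rw [hr₃]; linarith
  have hr4p : 0 < r₄ := by rw [hr₄]; linarith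
  have hr5p : 0 < r₅ := by rw [hr₅]; linarith
  have hDpos : 0 < α * r₂ * r₃ * r₄ + β * ε * r₃ * r₄ + γ * ζ * r₂ * r₄
      + δ * (η * ε * r₃ + ζ * θ * r₂) := by
    have h1 : 0 < α * r₂ * r₃ * r₄ := by
      exact mul_pos (mul_pos (mul_pos hα hr2p) hr3p) hr4p
    have h2 : 0 < β * ε * r₃ * r₄ := mul_pos (mul_pos (mul_pos hβ hε) hr3p) hr4p
    have h3 : 0 < γ * ζ * r₂ * r₄ := mul_pos (mul_pos (mul_pos hγ hζ) hr2p) hr4p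
    have h4 : 0 < δ * (η * ε * r₃ + ζ * θ * r₂) := by
      have := mul_pos (mul_pos hη hε) hr3p
      have := mul_pos (mul_pos hζ hθ) hr2p
      nlinarith
    linarith
  set Mc := (F + Sbar • vecMulVec b c).map (Complex.ofReal) with hMcdef
  -- membership in the spectrum ↔ determinant vanishes
  have hmem : ∀ z : ℂ, z ∈ spectrum ℂ Mc ↔
      (z • (1 : Matrix (Fin 5) (Fin 5) ℂ) - Mc).det = 0 := by
    intro z
    rw [spectrum.mem_iff, Matrix.isUnit_iff_isUnit_det, isUnit_iff_ne_zero, not_ne_iff,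
      Algebra.algebraMap_eq_smul_one]
  -- explicit form of the closed-loop matrix
  have hMceq : Mc = !![(Sbar : ℂ) * α - r₁, Sbar * β, Sbar * γ, Sbar * δ, 0;
      (ε : ℂ), -r₂, 0, 0, 0;
      (ζ : ℂ), 0, -r₃, 0, 0;
      0, (η : ℂ), (θ : ℂ), -r₄, 0;
      0, 0, (μ : ℂ), (ν : ℂ), -r₅] := by
    rw [hMcdef, hF, hb, hc]
    funext i j
    fin_cases i <;> fin_cases j <;>
      simp [Matrix.map_apply, Matrix.add_apply, Matrix.smul_apply, Matrix.vecMulVec_apply,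
        Matrix.vecHead, Matrix.vecTail] <;> push_cast <;> ring
  -- the characteristic determinant
  have hdet : ∀ z : ℂ,
      (z • (1 : Matrix (Fin 5) (Fin 5) ℂ) - Mc).det =
      (z + r₅) * ((z + r₁) * (z + r₂) * (z + r₃) * (z + r₄)
        - (Sbar : ℂ) * ((α : ℂ) * ((z + r₂) * (z + r₃) * (z + r₄))
          + (β : ℂ) * ε * ((z + r₃) * (z + r₄))
          + (γ : ℂ) * ζ * ((z + r₂) * (z + r₄))
          + (δ : ℂ) * ((ε : ℂ) * η * (z + r₃) + (ζ : ℂ) * θ * (z + r₂)))) := by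
    intro z
    rw [hMceq]
    have hsub : z • (1 : Matrix (Fin 5) (Fin 5) ℂ)
        - !![(Sbar : ℂ) * α - r₁, Sbar * β, Sbar * γ, Sbar * δ, 0;
            (ε : ℂ), -r₂, 0, 0, 0;
            (ζ : ℂ), 0, -r₃, 0, 0;
            0, (η : ℂ), (θ : ℂ), -r₄, 0;
            0, 0, (μ : ℂ), (ν : ℂ), -r₅]
        = !![z - ((Sbar : ℂ) * α - r₁), -((Sbar : ℂ) * β), -((Sbar : ℂ) * γ), -((Sbar : ℂ) * δ), 0;
            -(ε : ℂ), z + r₂, 0, 0, 0;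
            -(ζ : ℂ), 0, z + r₃, 0, 0;
            0, -(η : ℂ), -(θ : ℂ), z + r₄, 0;
            0, 0, -(μ : ℂ), -(ν : ℂ), z + r₅] := by
      funext i j
      fin_cases i <;> fin_cases j <;>
        simp [Matrix.sub_apply, Matrix.smul_apply, Matrix.one_apply, Matrix.vecHead,
          Matrix.vecTail] <;> ring
    rw [hsub]
    simp [Matrix.det_succ_row_zero, Fin.sum_univ_succ]
    norm_num [Fin.succAbove, Fin.lt_def, show ((2 : Fin 4).castSucc) = (2 : Fin 5) from rfl]
    simp [Fin.succAbove, Fin.lt_def]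
    ring
  constructor
  · -- Hurwitz → gain bound, by contraposition via a real nonnegative eigenvalue
    intro hH
    by_contra hlt
    push_neg at hlt
    have hRD : r₁ * r₂ * r₃ * r₄ ≤ Sbar * (α * r₂ * r₃ * r₄ + β * ε * r₃ * r₄
        + γ * ζ * r₂ * r₄ + δ * (η * ε * r₃ + ζ * θ * r₂)) := by
      rw [div_le_iff₀ hDpos] at hlt; linarith
    set p : ℝ → ℝ := fun t => (t + r₁) * (t + r₂) * (t + r₃) * (t + r₄)
      - Sbar * (α * ((t + r₂) * (t + r₃) * (t + r₄))
        + β * ε * ((t + r₃) * (t + r₄)) + γ * ζ * ((t + r₂) * (t + r₄))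
        + δ * (ε * η * (t + r₃) + ζ * θ * (t + r₂))) with hp
    have hp0 : p 0 ≤ 0 := by
      simp only [hp, zero_add]
      linarith [hRD]
    have key : ∀ T : ℝ, 1 ≤ T →
        Sbar * (α + β * ε + γ * ζ + δ * (ε * η + ζ * θ)) < T + r₁ → 0 < p T := by
      intro T hT1 hTC
      have hu2 : 1 ≤ T + r₂ := by linarith
      have hu3 : 1 ≤ T + r₃ := by linarith
      have hu4 : 1 ≤ T + r₄ := by linarith
      have hp2 : (0:ℝ) < T + r₂ := by linarith
      have hp3 : (0:ℝ) < T + r₃ := by linarith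
      have hp4 : (0:ℝ) < T + r₄ := by linarith
      have t2 : (T + r₃) * (T + r₄) ≤ (T + r₂) * ((T + r₃) * (T + r₄)) :=
        le_mul_of_one_le_left (by positivity) hu2
      have t3 : (T + r₂) * (T + r₄) ≤ (T + r₃) * ((T + r₂) * (T + r₄)) :=
        le_mul_of_one_le_left (by positivity) hu3
      have t4 : (T + r₃) ≤ ((T + r₂) * (T + r₄)) * (T + r₃) :=
        le_mul_of_one_le_left (by positivity) (by nlinarith)
      have t5 : (T + r₂) ≤ ((T + r₃) * (T + r₄)) * (T + r₂) :=
        le_mul_of_one_le_left (by positivity) (by nlinarith)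
      have g2 := mul_le_mul_of_nonneg_left t2 (by positivity : (0:ℝ) ≤ β * ε)
      have g3 := mul_le_mul_of_nonneg_left t3 (by positivity : (0:ℝ) ≤ γ * ζ)
      have g4 := mul_le_mul_of_nonneg_left t4 (by positivity : (0:ℝ) ≤ δ * (ε * η))
      have g5 := mul_le_mul_of_nonneg_left t5 (by positivity : (0:ℝ) ≤ δ * (ζ * θ))
      have hQle : α * ((T + r₂) * (T + r₃) * (T + r₄))
          + β * ε * ((T + r₃) * (T + r₄)) + γ * ζ * ((T + r₂) * (T + r₄))
          + δ * (ε * η * (T + r₃) + ζ * θ * (T + r₂))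
          ≤ (α + β * ε + γ * ζ + δ * (ε * η + ζ * θ))
            * ((T + r₂) * ((T + r₃) * (T + r₄))) := by linarith [g2, g3, g4, g5]
      have hSQ := mul_le_mul_of_nonneg_left hQle hSbar
      have hd : 0 < (T + r₁ - Sbar * (α + β * ε + γ * ζ + δ * (ε * η + ζ * θ)))
          * ((T + r₂) * ((T + r₃) * (T + r₄))) :=
        mul_pos (by linarith) (by positivity)
      simp only [hp]
      linarith [hSQ, hd]
    obtain ⟨T, hT1, hTC⟩ : ∃ T : ℝ, 1 ≤ T ∧
        Sbar * (α + β * ε + γ * ζ + δ * (ε * η + ζ * θ)) < T + r₁ := by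
      refine ⟨1 + Sbar * (α + β * ε + γ * ζ + δ * (ε * η + ζ * θ)), ?_, by linarith⟩
      nlinarith [mul_nonneg hSbar (by positivity : (0:ℝ) ≤ α + β * ε + γ * ζ + δ * (ε * η + ζ * θ))]
    have hpT : 0 < p T := key T hT1 hTC
    have hcont : ContinuousOn p (Set.Icc 0 T) := by
      apply Continuous.continuousOn; simp only [hp]; fun_prop
    have hmemI : (0:ℝ) ∈ Set.Icc (p 0) (p T) := ⟨hp0, hpT.le⟩
    obtain ⟨t₀, ht₀I, hpt₀⟩ := intermediate_value_Icc (by linarith : (0:ℝ) ≤ T) hcont hmemI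
    have ht₀0 : 0 ≤ t₀ := ht₀I.1
    have hspec : (t₀ : ℂ) ∈ spectrum ℂ Mc := by
      rw [hmem, hdet]
      have hcast : ((t₀:ℂ) + r₁) * ((t₀:ℂ) + r₂) * ((t₀:ℂ) + r₃) * ((t₀:ℂ) + r₄)
          - (Sbar : ℂ) * ((α : ℂ) * (((t₀:ℂ) + r₂) * ((t₀:ℂ) + r₃) * ((t₀:ℂ) + r₄))
            + (β : ℂ) * ε * (((t₀:ℂ) + r₃) * ((t₀:ℂ) + r₄))
            + (γ : ℂ) * ζ * (((t₀:ℂ) + r₂) * ((t₀:ℂ) + r₄))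
            + (δ : ℂ) * ((ε : ℂ) * η * ((t₀:ℂ) + r₃) + (ζ : ℂ) * θ * ((t₀:ℂ) + r₂)))
          = ((p t₀ : ℝ) : ℂ) := by
        simp only [hp]; push_cast; ring
      rw [hcast, hpt₀]
      simp
    have := hH _ hspec
    simp only [Complex.ofReal_re] at this
    linarith
  · -- gain bound → Hurwitz
    intro hlt z hz
    rw [hmem, hdet] at hz
    rcases mul_eq_zero.mp hz with h5 | hP
    · have hz5 : z = -(r₅ : ℂ) := by linear_combination h5
      rw [hz5]
      simp only [Complex.neg_re, Complex.ofReal_re]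
      linarith
    · by_contra hre
      push_neg at hre
      have heq : (z + r₁) * (z + r₂) * (z + r₃) * (z + r₄)
          = (Sbar : ℂ) * ((α : ℂ) * ((z + r₂) * (z + r₃) * (z + r₄))
            + (β : ℂ) * ε * ((z + r₃) * (z + r₄))
            + (γ : ℂ) * ζ * ((z + r₂) * (z + r₄))
            + (δ : ℂ) * ((ε : ℂ) * η * (z + r₃) + (ζ : ℂ) * θ * (z + r₂))) :=
        sub_eq_zero.mp hP
      have hai : ∀ r : ℝ, 0 < r → r ≤ ‖z + r‖ := by
        intro r hr
        have h := Complex.re_le_norm (z + r)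
        simp only [Complex.add_re, Complex.ofReal_re] at h
        linarith
      have ha1 := hai r₁ hr1p
      have ha2 := hai r₂ hr2p
      have ha3 := hai r₃ hr3p
      have ha4 := hai r₄ hr4p
      have habs := congrArg (fun w : ℂ => ‖w‖) heq
      simp only [norm_mul, Complex.norm_real, Real.norm_eq_abs, abs_of_nonneg hSbar] at habs
      -- bound the absolute value of the numerator polynomial
      have hQb : ‖(α : ℂ) * ((z + r₂) * (z + r₃) * (z + r₄))
            + (β : ℂ) * ε * ((z + r₃) * (z + r₄))
            + (γ : ℂ) * ζ * ((z + r₂) * (z + r₄))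
            + (δ : ℂ) * ((ε : ℂ) * η * (z + r₃) + (ζ : ℂ) * θ * (z + r₂))‖
          ≤ α * (‖z + r₂‖ * ‖z + r₃‖ * ‖z + r₄‖)
            + β * ε * (‖z + r₃‖ * ‖z + r₄‖)
            + γ * ζ * (‖z + r₂‖ * ‖z + r₄‖)
            + δ * (ε * η * ‖z + r₃‖ + ζ * θ * ‖z + r₂‖) := by
        refine le_trans (norm_add_le _ _) ?_
        refine add_le_add (le_trans (norm_add_le _ _) ?_) ?_
        · refine add_le_add (le_trans (norm_add_le _ _) ?_) ?_
          · refine add_le_add (le_of_eq ?_) (le_of_eq ?_)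
            · simp only [norm_mul, Complex.norm_real, Real.norm_eq_abs, abs_of_pos hα]
            · simp only [norm_mul, Complex.norm_real, Real.norm_eq_abs, abs_of_pos hβ, abs_of_pos hε]
          · exact le_of_eq (by simp only [norm_mul, Complex.norm_real, Real.norm_eq_abs, abs_of_pos hγ,
              abs_of_pos hζ])
        · rw [norm_mul, Complex.norm_real, Real.norm_eq_abs, abs_of_pos hδ]
          refine mul_le_mul_of_nonneg_left ?_ hδ.le
          refine le_trans (norm_add_le _ _) ?_
          simp only [norm_mul, Complex.norm_real, Real.norm_eq_abs, abs_of_pos hε, abs_of_pos hη,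
            abs_of_pos hζ, abs_of_pos hθ]
          exact le_rfl
      have hkey : ‖z + r₁‖ * ‖z + r₂‖ * ‖z + r₃‖
            * ‖z + r₄‖
          ≤ Sbar * (α * (‖z + r₂‖ * ‖z + r₃‖ * ‖z + r₄‖)
            + β * ε * (‖z + r₃‖ * ‖z + r₄‖)
            + γ * ζ * (‖z + r₂‖ * ‖z + r₄‖)
            + δ * (ε * η * ‖z + r₃‖ + ζ * θ * ‖z + r₂‖)) := by
        rw [habs]
        exact mul_le_mul_of_nonneg_left hQb hSbar
      have hSD : Sbar * (α * r₂ * r₃ * r₄ + β * ε * r₃ * r₄ + γ * ζ * r₂ * r₄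
          + δ * (η * ε * r₃ + ζ * θ * r₂)) < r₁ * r₂ * r₃ * r₄ := by
        rw [lt_div_iff₀ hDpos] at hlt; linarith
      exact idart_aux_contra α β γ δ ε ζ η θ r₁ r₂ r₃ r₄ Sbar _ _ _ _
        hα hβ hγ hδ hε hζ hη hθ hr1p hr2p hr3p hr4p hSbar ha1 ha2 ha3 ha4 hkey hSD
end

section
/- Suppose x : [0,∞) → ℝ⁵ solves x' = Fx + bu with u(t) = S(t)·cᵀx(t) and S' = -S·cᵀx, where F is invertible, x(t) → 0 and S(t) → S̄ > 0 as t → ∞, and all relevant integrals converge. Then ∫₀^∞ cᵀx(φ)dφ = log(S(0)/S̄), and f₀ + R₀(S(0) - S̄) = log(S(0)/S̄), where f₀ = -cᵀF⁻¹x(0) and R₀ = -cᵀF⁻¹b. -/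
open Matrix MeasureTheory Filter in
/-- Final-size relation: ∫₀^∞ cᵀx = log(S(0)/S̄) and
f₀ + R₀(S(0) - S̄) = log(S(0)/S̄). -/
theorem idart_final_size_relation
    (F : Matrix (Fin 5) (Fin 5) ℝ) (hFinv : IsUnit F.det)
    (b c : Fin 5 → ℝ)
    (hb : b = ![1, 0, 0, 0, 0])
    (α β γ δ : ℝ) (hc : c = ![α, β, γ, δ, 0])
    (x : ℝ → Fin 5 → ℝ) (S : ℝ → ℝ)
    (hx : ∀ t i, HasDerivAt (fun t => x t i)
      ((F *ᵥ x t) i + b i * (S t * (c ⬝ᵥ x t))) t)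
    (hS : ∀ t, HasDerivAt S (-(S t) * (c ⬝ᵥ x t)) t)
    (hS0 : 0 < S 0)
    (Sbar : ℝ) (hSbar : 0 < Sbar)
    (hSlim : Tendsto S atTop (nhds Sbar))
    (hxlim : Tendsto x atTop (nhds 0))
    (hxint : ∀ i, IntegrableOn (fun t => x t i) (Set.Ioi (0:ℝ))) :
    (∫ φ in Set.Ioi (0:ℝ), c ⬝ᵥ x φ) = Real.log (S 0 / Sbar) ∧
    (-(c ⬝ᵥ (F⁻¹ *ᵥ x 0))) + (-(c ⬝ᵥ (F⁻¹ *ᵥ b))) * (S 0 - Sbar)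
      = Real.log (S 0 / Sbar) := by
  -- notation
  set u : ℝ → ℝ := fun t => c ⬝ᵥ x t with hu_def
  -- continuity of coordinates
  have hxcont : ∀ i, Continuous (fun t => x t i) := fun i =>
    continuous_iff_continuousAt.2 fun t => (hx t i).continuousAt
  have hScont : Continuous S := continuous_iff_continuousAt.2 fun t => (hS t).continuousAt
  have hucont : Continuous u := by
    have : Continuous fun t => ∑ i, c i * x t i :=
      continuous_finset_sum _ fun i _ => continuous_const.mul (hxcont i)
    simpa [hu_def, dotProduct] using this
  have hxi_lim : ∀ i, Tendsto (fun t => x t i) atTop (nhds 0) := by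
    intro i
    have := ((continuous_apply i).tendsto (0 : Fin 5 → ℝ)).comp hxlim
    exact this
  -- the cumulative integral g
  set g : ℝ → ℝ := fun t => ∫ s in (0:ℝ)..t, u s with hg_def
  have hg : ∀ t, HasDerivAt g (u t) t := by
    intro t
    exact intervalIntegral.integral_hasDerivAt_right
      (hucont.intervalIntegrable _ _)
      (hucont.stronglyMeasurableAtFilter _ _)
      hucont.continuousAt
  -- S t * exp (g t) is constant
  have hconst : ∀ t, S t * Real.exp (g t) = S 0 := by
    intro t
    have hderiv : ∀ s, HasDerivAt (fun r => S r * Real.exp (g r)) 0 s := by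
      intro s
      have h1 := (hS s).mul ((hg s).exp)
      refine HasDerivAt.congr_deriv h1 ?_
      simp only [hu_def]
      ring
    have := is_const_of_deriv_eq_zero (f := fun r => S r * Real.exp (g r))
      (fun s => (hderiv s).differentiableAt) (fun s => (hderiv s).deriv) t 0
    simpa [hg_def] using this
  have hSpos : ∀ t, 0 < S t := by
    intro t
    have h := hconst t
    nlinarith [Real.exp_pos (g t), hS0]
  have hglog : ∀ t, g t = Real.log (S 0) - Real.log (S t) := by
    intro t
    have h := hconst t
    have : Real.log (S t * Real.exp (g t)) = Real.log (S 0) := by rw [h]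
    rw [Real.log_mul (ne_of_gt (hSpos t)) (Real.exp_ne_zero _), Real.log_exp] at this
    linarith
  -- limit of g along atTop
  have hglim : Tendsto g atTop (nhds (Real.log (S 0) - Real.log Sbar)) := by
    have hlogS : Tendsto (fun t => Real.log (S t)) atTop (nhds (Real.log Sbar)) :=
      ((Real.continuousAt_log (ne_of_gt hSbar)).tendsto).comp hSlim
    have : Tendsto (fun t => Real.log (S 0) - Real.log (S t)) atTop
        (nhds (Real.log (S 0) - Real.log Sbar)) := tendsto_const_nhds.sub hlogS
    exact this.congr fun t => (hglog t).symm
  -- integrability of u on Ioi 0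
  have huint : IntegrableOn u (Set.Ioi (0:ℝ)) := by
    have : IntegrableOn (fun t => ∑ i, c i * x t i) (Set.Ioi (0:ℝ)) :=
      integrable_finset_sum _ fun i _ => (hxint i).const_mul (c i)
    exact this.congr_fun (fun t _ => by simp [hu_def, dotProduct]) measurableSet_Ioi
  have hglim2 : Tendsto g atTop (nhds (∫ s in Set.Ioi (0:ℝ), u s)) :=
    intervalIntegral_tendsto_integral_Ioi 0 huint tendsto_id
  have part1 : (∫ s in Set.Ioi (0:ℝ), u s) = Real.log (S 0 / Sbar) := by
    rw [tendsto_nhds_unique hglim2 hglim,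
      Real.log_div (ne_of_gt hS0) (ne_of_gt hSbar)]
  -- Part 2
  set I : Fin 5 → ℝ := fun i => ∫ t in Set.Ioi (0:ℝ), x t i with hI_def
  -- ∫₀ᵗ S u = S 0 - S t
  have hSu_int : ∀ t : ℝ, (∫ s in (0:ℝ)..t, S s * u s) = S 0 - S t := by
    intro t
    have h1 : (∫ s in (0:ℝ)..t, -(S s) * u s) = S t - S 0 :=
      intervalIntegral.integral_eq_sub_of_hasDerivAt (fun s _ => hS s)
        ((hScont.neg.mul hucont).intervalIntegrable _ _)
    have h2 : (∫ s in (0:ℝ)..t, -(S s * u s)) = S t - S 0 := by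
      rw [← h1]; congr 1; ext s; ring
    rw [intervalIntegral.integral_neg] at h2
    linarith
  -- main limiting identity per coordinate
  have key : ∀ i, (F *ᵥ I) i + b i * (S 0 - Sbar) = -(x 0 i) := by
    intro i
    have hFcont : Continuous fun s => (F *ᵥ x s) i := by
      have : Continuous fun s => ∑ j, F i j * x s j :=
        continuous_finset_sum _ fun j _ => continuous_const.mul (hxcont j)
      simpa [Matrix.mulVec, dotProduct] using this
    have hftc : ∀ t : ℝ,
        (∫ s in (0:ℝ)..t, ((F *ᵥ x s) i + b i * (S s * u s))) = x t i - x 0 i := by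
      intro t
      exact intervalIntegral.integral_eq_sub_of_hasDerivAt (fun s _ => hx s i)
        ((hFcont.add (continuous_const.mul (hScont.mul hucont))).intervalIntegrable _ _)
    have hsplit : ∀ t : ℝ,
        (∑ j, F i j * ∫ s in (0:ℝ)..t, x s j) + b i * (S 0 - S t) = x t i - x 0 i := by
      intro t
      have h1 : (∫ s in (0:ℝ)..t, ((F *ᵥ x s) i + b i * (S s * u s)))
          = (∫ s in (0:ℝ)..t, (F *ᵥ x s) i) + ∫ s in (0:ℝ)..t, b i * (S s * u s) :=
        intervalIntegral.integral_add (hFcont.intervalIntegrable _ _)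
          ((continuous_const.mul (hScont.mul hucont)).intervalIntegrable _ _)
      have h2 : (∫ s in (0:ℝ)..t, b i * (S s * u s)) = b i * (S 0 - S t) := by
        rw [intervalIntegral.integral_const_mul]
        rw [show (∫ s in (0:ℝ)..t, S s * u s) = S 0 - S t from hSu_int t]
      have h3 : (∫ s in (0:ℝ)..t, (F *ᵥ x s) i) = ∑ j, F i j * ∫ s in (0:ℝ)..t, x s j := by
        have : (∫ s in (0:ℝ)..t, ∑ j, F i j * x s j)
            = ∑ j, ∫ s in (0:ℝ)..t, F i j * x s j :=
          intervalIntegral.integral_finset_sum fun j _ =>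
            (continuous_const.mul (hxcont j)).intervalIntegrable _ _
        simp only [Matrix.mulVec, dotProduct]
        rw [this]
        exact Finset.sum_congr rfl fun j _ => intervalIntegral.integral_const_mul _ _
      have := hftc t
      rw [h1, h2, h3] at this
      linarith
    -- take limits
    have hlhs : Tendsto (fun t => (∑ j, F i j * ∫ s in (0:ℝ)..t, x s j) + b i * (S 0 - S t))
        atTop (nhds ((∑ j, F i j * I j) + b i * (S 0 - Sbar))) := by
      refine Tendsto.add ?_ ?_
      · exact tendsto_finset_sum _ fun j _ => Tendsto.const_mul _
          (intervalIntegral_tendsto_integral_Ioi 0 (hxint j) tendsto_id)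
      · exact (tendsto_const_nhds.sub hSlim).const_mul _
    have hrhs : Tendsto (fun t => x t i - x 0 i) atTop (nhds (-(x 0 i))) := by
      have := (hxi_lim i).sub (tendsto_const_nhds (x := x 0 i))
      simpa using this
    have heq := tendsto_nhds_unique (hlhs.congr fun t => hsplit t) hrhs
    simpa [Matrix.mulVec, dotProduct] using heq
  -- solve for I
  have hFI : F *ᵥ I = -(x 0) - (S 0 - Sbar) • b := by
    funext i
    have := key i
    simp only [Pi.sub_apply, Pi.neg_apply, Pi.smul_apply, smul_eq_mul]
    linarith
  have hI_eq : I = F⁻¹ *ᵥ (-(x 0) - (S 0 - Sbar) • b) := by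
    rw [← hFI, Matrix.mulVec_mulVec, Matrix.nonsing_inv_mul F hFinv, Matrix.one_mulVec]
  have hcI : c ⬝ᵥ I = ∫ s in Set.Ioi (0:ℝ), u s := by
    have : (∫ s in Set.Ioi (0:ℝ), ∑ j, c j * x s j) = ∑ j, ∫ s in Set.Ioi (0:ℝ), c j * x s j :=
      integral_finset_sum _ fun j _ => (hxint j).const_mul (c j)
    simp only [hu_def, dotProduct]
    rw [this]
    exact (Finset.sum_congr rfl fun j _ => by
      rw [integral_const_mul]).symm
  refine ⟨part1, ?_⟩
  have hfinal : c ⬝ᵥ I = -(c ⬝ᵥ (F⁻¹ *ᵥ x 0)) + (-(c ⬝ᵥ (F⁻¹ *ᵥ b))) * (S 0 - Sbar) := by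
    rw [hI_eq]
    rw [Matrix.mulVec_sub, Matrix.mulVec_neg, Matrix.mulVec_smul]
    simp [dotProduct_sub, dotProduct_neg, dotProduct_smul, smul_eq_mul]
    ring
  rw [← hfinal, hcI, part1]
end

section
/- Under the assumptions of the final-size relation, with f : ℝ⁵ → ℝ a linear functional and H'(t) = fᵀx(t), H(t) converges to H̄ = H(0) + f_H + R_H(S(0) - S̄), where f_H = -fᵀF⁻¹x(0) and R_H = -fᵀF⁻¹b. -/
open Matrix MeasureTheory Filter in
/-- Final-size relation for the healed: H(t) → H(0) + f_H + R_H(S(0) - S̄),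
where f_H = -fᵀF⁻¹x(0) and R_H = -fᵀF⁻¹b. -/
theorem idart_final_size_H
    (F : Matrix (Fin 5) (Fin 5) ℝ) (hFinv : IsUnit F.det)
    (b c f : Fin 5 → ℝ)
    (hb : b = ![1, 0, 0, 0, 0])
    (α β γ δ : ℝ) (hc : c = ![α, β, γ, δ, 0])
    (x : ℝ → Fin 5 → ℝ) (S H : ℝ → ℝ)
    (hx : ∀ t i, HasDerivAt (fun t => x t i)
      ((F *ᵥ x t) i + b i * (S t * (c ⬝ᵥ x t))) t)
    (hS : ∀ t, HasDerivAt S (-(S t) * (c ⬝ᵥ x t)) t)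
    (hH : ∀ t, HasDerivAt H (f ⬝ᵥ x t) t)
    (hS0 : 0 < S 0)
    (Sbar : ℝ) (hSbar : 0 < Sbar)
    (hSlim : Tendsto S atTop (nhds Sbar))
    (hxlim : Tendsto x atTop (nhds 0))
    (hxint : ∀ i, IntegrableOn (fun t => x t i) (Set.Ioi (0:ℝ))) :
    Tendsto H atTop (nhds
      (H 0 + (-(f ⬝ᵥ (F⁻¹ *ᵥ x 0))) + (-(f ⬝ᵥ (F⁻¹ *ᵥ b))) * (S 0 - Sbar))) := by
  have hxc : ∀ i, Continuous (fun t => x t i) := fun i =>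
    continuous_iff_continuousAt.2 fun t => (hx t i).continuousAt
  have hfx : Continuous (fun t => f ⬝ᵥ x t) := by
    simp only [dotProduct]
    exact continuous_finset_sum _ fun j _ => continuous_const.mul (hxc j)
  have hFx : ∀ i, Continuous (fun t => (F *ᵥ x t) i) := fun i => by
    simp only [mulVec, dotProduct]
    exact continuous_finset_sum _ fun j _ => continuous_const.mul (hxc j)
  set I : Fin 5 → ℝ := fun i => ∫ t in Set.Ioi (0:ℝ), x t i with hIdef
  -- the key final-size identity
  have key : ∀ i, (F *ᵥ I) i = -(x 0 i) - b i * (S 0 - Sbar) := by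
    intro i
    have hderiv : ∀ t, HasDerivAt (fun t => x t i + b i * S t) ((F *ᵥ x t) i) t := by
      intro t
      have h := (hx t i).add ((hS t).const_mul (b i))
      exact h.congr_deriv (by ring)
    have hint : IntegrableOn (fun t => (F *ᵥ x t) i) (Set.Ioi 0) := by
      simp only [mulVec, dotProduct]
      exact integrable_finset_sum _ fun j _ => (hxint j).const_mul _
    have heq : ∀ T : ℝ, ∫ t in (0:ℝ)..T, (F *ᵥ x t) i
        = (x T i + b i * S T) - (x 0 i + b i * S 0) := fun T =>
      intervalIntegral.integral_eq_sub_of_hasDerivAt (fun t _ => hderiv t)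
        ((hFx i).intervalIntegrable _ _)
    have h1 : Tendsto (fun T : ℝ => ∫ t in (0:ℝ)..T, (F *ᵥ x t) i) atTop
        (nhds (∫ t in Set.Ioi (0:ℝ), (F *ᵥ x t) i)) :=
      intervalIntegral_tendsto_integral_Ioi 0 hint tendsto_id
    have hx0 : Tendsto (fun T => x T i) atTop (nhds 0) := by
      rw [tendsto_pi_nhds] at hxlim; simpa using hxlim i
    have h2 : Tendsto (fun T => (x T i + b i * S T) - (x 0 i + b i * S 0)) atTop
        (nhds ((0 + b i * Sbar) - (x 0 i + b i * S 0))) :=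
      (hx0.add (hSlim.const_mul (b i))).sub tendsto_const_nhds
    have h3 : ∫ t in Set.Ioi (0:ℝ), (F *ᵥ x t) i
        = (0 + b i * Sbar) - (x 0 i + b i * S 0) :=
      tendsto_nhds_unique (h1.congr fun T => heq T) h2
    have h4 : ∫ t in Set.Ioi (0:ℝ), (F *ᵥ x t) i = (F *ᵥ I) i := by
      simp only [mulVec, dotProduct]
      rw [integral_finset_sum _ fun j _ => (hxint j).const_mul _]
      exact Finset.sum_congr rfl fun j _ => integral_const_mul _ _
    rw [← h4, h3]; ring
  have hFI : F *ᵥ I = -(x 0) + (-(S 0 - Sbar)) • b := by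
    funext i
    simp only [Pi.add_apply, Pi.neg_apply, Pi.smul_apply, smul_eq_mul, key i]
    ring
  have hIeq : I = F⁻¹ *ᵥ (-(x 0) + (-(S 0 - Sbar)) • b) := by
    rw [← hFI, mulVec_mulVec, Matrix.nonsing_inv_mul F hFinv, one_mulVec]
  have hHeq : ∀ T : ℝ, H T = H 0 + ∫ t in (0:ℝ)..T, f ⬝ᵥ x t := by
    intro T
    have h := intervalIntegral.integral_eq_sub_of_hasDerivAt (f := H) (a := 0) (b := T)
      (fun t _ => hH t) (hfx.intervalIntegrable _ _)
    linarith
  have hintf : IntegrableOn (fun t => f ⬝ᵥ x t) (Set.Ioi 0) := by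
    simp only [dotProduct]
    exact integrable_finset_sum _ fun j _ => (hxint j).const_mul _
  have hlim : Tendsto (fun T : ℝ => ∫ t in (0:ℝ)..T, f ⬝ᵥ x t) atTop
      (nhds (∫ t in Set.Ioi (0:ℝ), f ⬝ᵥ x t)) :=
    intervalIntegral_tendsto_integral_Ioi 0 hintf tendsto_id
  have hIoi : ∫ t in Set.Ioi (0:ℝ), f ⬝ᵥ x t = f ⬝ᵥ I := by
    simp only [dotProduct]
    rw [integral_finset_sum _ fun j _ => (hxint j).const_mul _]
    exact Finset.sum_congr rfl fun j _ => integral_const_mul _ _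
  have hfinal : H 0 + f ⬝ᵥ I
      = H 0 + (-(f ⬝ᵥ (F⁻¹ *ᵥ x 0))) + (-(f ⬝ᵥ (F⁻¹ *ᵥ b))) * (S 0 - Sbar) := by
    rw [hIeq, mulVec_add, mulVec_smul, mulVec_neg, dotProduct_add, dotProduct_smul,
      dotProduct_neg, smul_eq_mul]
    ring
  have := (tendsto_const_nhds (x := H 0) (f := atTop)).add hlim
  rw [hIoi] at this
  have h5 : Tendsto H atTop (nhds (H 0 + f ⬝ᵥ I)) :=
    this.congr fun T => (hHeq T).symm
  rwa [hfinal] at h5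
end

section
/- Suppose S : [0,∞) → ℝ is nonincreasing, nonnegative, with S(t) → S̄, and suppose x(t) ∈ ℝ⁵ is a nonnegative solution of x' = (F + S(t)·bcᵀ)x that does not converge to 0 whenever the limit matrix F + S̄bcᵀ has an eigenvalue with positive real part. Then if x(0) > 0 componentwise and S converges, necessarily S̄ ≤ S̄* = 1/R₀ (i.e., the limit of the susceptible fraction cannot exceed the stability threshold). -/
open Filter intervalIntegral Real in
lemma decay_aux (r C : ℝ) (hr : 0 < r) (f y : ℝ → ℝ)
    (hfc : Continuous f) (hf0 : ∀ t, 0 ≤ f t)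
    (hy : ∀ t, HasDerivAt y (-r * y t + f t) t)
    (hynn : ∀ t, 0 ≤ y t)
    (hC : ∀ T, 0 ≤ T → (∫ s in (0:ℝ)..T, f s) ≤ C) :
    Tendsto y atTop (nhds 0) := by
  set G : ℝ → ℝ := fun T => ∫ s in (0:ℝ)..T, f s with hG
  have hGmono : Monotone G := by
    intro a b hab
    have : G b - G a = ∫ s in a..b, f s := by
      rw [hG]
      simp only
      rw [← intervalIntegral.integral_add_adjacent_intervals
        (hfc.intervalIntegrable 0 a) (hfc.intervalIntegrable a b)]
      ring
    nlinarith [intervalIntegral.integral_nonneg (μ := MeasureTheory.volume) hab (fun u _ => hf0 u)]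
  have hGbdd : BddAbove (Set.range G) := by
    refine ⟨max C 0, ?_⟩
    rintro _ ⟨T, rfl⟩
    rcases le_or_gt 0 T with h | h
    · exact le_max_of_le_left (hC T h)
    · refine le_max_of_le_right ?_
      rw [hG]; simp only
      rw [intervalIntegral.integral_symm]
      simp only [neg_nonpos]
      exact intervalIntegral.integral_nonneg (μ := MeasureTheory.volume) h.le (fun u _ => hf0 u)
  set L := ⨆ T, G T with hL
  have hGlim : Tendsto G atTop (nhds L) := tendsto_atTop_ciSup hGmono hGbdd
  -- formula for y
  have hyform : ∀ T : ℝ, y T = exp (-r * T) * (y 0 + ∫ s in (0:ℝ)..T, exp (r * s) * f s) := by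
    intro T
    have hu : ∀ t : ℝ, HasDerivAt (fun t => exp (r * t) * y t) (exp (r * t) * f t) t := by
      intro t
      have h1 : HasDerivAt (fun t : ℝ => exp (r * t)) (r * exp (r * t)) t := by
        have := (Real.hasDerivAt_exp (r * t)).comp t ((hasDerivAt_id t).const_mul r)
        exact this.congr_deriv (by ring)
      have := h1.mul (hy t)
      exact this.congr_deriv (by ring)
    have hint : ∀ a b : ℝ, (∫ s in a..b, exp (r * s) * f s)
        = exp (r * b) * y b - exp (r * a) * y a := by
      intro a b
      rcases le_total a b with h | h
      · exact intervalIntegral.integral_eq_sub_of_hasDerivAt (fun t _ => hu t)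
          (((Real.continuous_exp.comp (continuous_const.mul continuous_id)).mul hfc).intervalIntegrable a b)
      · rw [intervalIntegral.integral_symm]
        rw [intervalIntegral.integral_eq_sub_of_hasDerivAt (fun t _ => hu t)
          (((Real.continuous_exp.comp (continuous_const.mul continuous_id)).mul hfc).intervalIntegrable b a)]
        ring
    have := hint 0 T
    have hx : exp (r * T) ≠ 0 := (exp_pos _).ne'
    rw [this, mul_zero, Real.exp_zero, neg_mul, Real.exp_neg]
    field_simp
    ring
  -- bound
  have hbound : ∀ T : ℝ, 0 ≤ T →
      y T ≤ exp (-r * T) * y 0 + exp (-(r/2) * T) * L + (G T - G (T/2)) := by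
    intro T hT
    have hT2 : (0:ℝ) ≤ T/2 := by linarith
    have hec : Continuous (fun s : ℝ => exp (r * s) * f s) :=
      (Real.continuous_exp.comp (continuous_const.mul continuous_id)).mul hfc
    have h1 : (∫ s in (0:ℝ)..(T/2), exp (r * s) * f s) ≤ exp (r * (T/2)) * G (T/2) := by
      have : (∫ s in (0:ℝ)..(T/2), exp (r * (T/2)) * f s) = exp (r * (T/2)) * G (T/2) := by
        rw [intervalIntegral.integral_const_mul]
      rw [← this]
      apply intervalIntegral.integral_mono_on hT2 (hec.intervalIntegrable _ _)
        ((continuous_const.mul hfc).intervalIntegrable _ _)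
      intro s hs
      have : exp (r * s) ≤ exp (r * (T/2)) :=
        exp_le_exp.2 (mul_le_mul_of_nonneg_left hs.2 hr.le)
      simp only [Pi.mul_apply]
      nlinarith [hf0 s]
    have h2 : (∫ s in (T/2)..T, exp (r * s) * f s) ≤ exp (r * T) * (G T - G (T/2)) := by
      have heq : (∫ s in (T/2)..T, exp (r * T) * f s) = exp (r * T) * (G T - G (T/2)) := by
        rw [intervalIntegral.integral_const_mul]
        congr 1
        rw [eq_sub_iff_add_eq, add_comm]
        exact intervalIntegral.integral_add_adjacent_intervals
          (hfc.intervalIntegrable 0 (T/2)) (hfc.intervalIntegrable (T/2) T)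
      rw [← heq]
      apply intervalIntegral.integral_mono_on (by linarith) (hec.intervalIntegrable _ _)
        ((continuous_const.mul hfc).intervalIntegrable _ _)
      intro s hs
      have : exp (r * s) ≤ exp (r * T) :=
        exp_le_exp.2 (mul_le_mul_of_nonneg_left hs.2 hr.le)
      simp only [Pi.mul_apply]
      nlinarith [hf0 s]
    have hsplit : (∫ s in (0:ℝ)..T, exp (r * s) * f s)
        = (∫ s in (0:ℝ)..(T/2), exp (r * s) * f s) + ∫ s in (T/2)..T, exp (r * s) * f s :=
      (intervalIntegral.integral_add_adjacent_intervals
        (hec.intervalIntegrable 0 (T/2)) (hec.intervalIntegrable (T/2) T)).symm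
    have hGL : G (T/2) ≤ L := le_ciSup hGbdd (T/2)
    have hepos := exp_pos (-r * T)
    have key : exp (-r*T) * exp (r * (T/2)) = exp (-(r/2) * T) := by
      rw [← Real.exp_add]; ring_nf
    have key2 : exp (-r*T) * exp (r * T) = 1 := by
      rw [← Real.exp_add]; simp
    have hGd : 0 ≤ G T - G (T/2) := by
      have := hGmono (by linarith : T/2 ≤ T); linarith
    calc y T = exp (-r * T) * (y 0 + ∫ s in (0:ℝ)..T, exp (r * s) * f s) := hyform T
      _ ≤ exp (-r * T) * y 0 + exp (-r*T) * (exp (r * (T/2)) * G (T/2))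
            + exp (-r*T) * (exp (r * T) * (G T - G (T/2))) := by
          rw [hsplit]; nlinarith [hepos.le]
      _ ≤ exp (-r * T) * y 0 + exp (-(r/2) * T) * L + (G T - G (T/2)) := by
          rw [← mul_assoc, ← mul_assoc, key, key2, one_mul]
          have h3 : exp (-(r/2)*T) * G (T/2) ≤ exp (-(r/2)*T) * L :=
            mul_le_mul_of_nonneg_left hGL (exp_pos _).le
          linarith
  -- limits
  have hexp : ∀ a : ℝ, 0 < a → Tendsto (fun T : ℝ => exp (-a * T)) atTop (nhds 0) := by
    intro a ha
    apply Real.tendsto_exp_atBot.comp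
    exact (tendsto_atTop_atBot_of_antitone (fun u v huv => by nlinarith)
      (fun bb => ⟨-bb/a, by rw [mul_comm]; field_simp; exact le_rfl⟩))
  have hG2 : Tendsto (fun T => G (T/2)) atTop (nhds L) :=
    hGlim.comp (tendsto_id.atTop_div_const two_pos)
  have hB : Tendsto (fun T => exp (-r * T) * y 0 + exp (-(r/2) * T) * L + (G T - G (T/2)))
      atTop (nhds 0) := by
    have := (((hexp r hr).mul_const (y 0)).add ((hexp (r/2) (by linarith)).mul_const L)).add
      (hGlim.sub hG2)
    simpa using this
  exact squeeze_zero' (Filter.Eventually.of_forall hynn)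
    (Filter.eventually_atTop.2 ⟨0, fun T hT => hbound T hT⟩) hB


lemma exists_pos_root (r₁ r₂ r₃ r₄ α β γ δ ε ζ η θ Sb : ℝ)
    (hr₁ : 0 < r₁) (hr₂ : 0 < r₂) (hr₃ : 0 < r₃) (hr₄ : 0 < r₄)
    (hα : 0 < α) (hβ : 0 < β) (hγ : 0 < γ) (hδ : 0 < δ) (hε : 0 < ε)
    (hζ : 0 < ζ) (hη : 0 < η) (hθ : 0 < θ) (hSb : 0 < Sb)
    (h0 : r₁*r₂*r₃*r₄ - Sb*(α*r₂*r₃*r₄ + β*ε*r₃*r₄ + γ*ζ*r₂*r₄ + δ*(η*ε*r₃+ζ*θ*r₂)) < 0) :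
    ∃ l : ℝ, 0 < l ∧ (l+r₁)*(l+r₂)*(l+r₃)*(l+r₄)
      - Sb*(α*(l+r₂)*(l+r₃)*(l+r₄) + β*ε*(l+r₃)*(l+r₄)
        + γ*ζ*(l+r₂)*(l+r₄) + δ*(η*ε*(l+r₃) + ζ*θ*(l+r₂))) = 0 := by
  set q : ℝ → ℝ := fun l => (l+r₁)*(l+r₂)*(l+r₃)*(l+r₄)
    - Sb*(α*(l+r₂)*(l+r₃)*(l+r₄) + β*ε*(l+r₃)*(l+r₄)
      + γ*ζ*(l+r₂)*(l+r₄) + δ*(η*ε*(l+r₃) + ζ*θ*(l+r₂))) with hqdef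
  have hq0' : q 0 < 0 := by
    have hrw : q 0 = r₁*r₂*r₃*r₄ - Sb*(α*r₂*r₃*r₄ + β*ε*r₃*r₄ + γ*ζ*r₂*r₄
        + δ*(η*ε*r₃+ζ*θ*r₂)) := by rw [hqdef]; ring
    rw [hrw]; exact h0
  set K := Sb*(α+β*ε+γ*ζ+δ*(η*ε+ζ*θ)) with hK
  have hKpos : 0 < K := mul_pos hSb (by positivity)
  obtain ⟨Λ, hΛ1, hΛ2, hΛ3, hΛ4, hΛK⟩ : ∃ Λ : ℝ, 1 ≤ Λ ∧ r₂ ≤ Λ ∧ r₃ ≤ Λ ∧ r₄ ≤ Λ ∧ 8*K+1 ≤ Λ :=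
    ⟨max 1 (max r₂ (max r₃ (max r₄ (8*K+1)))), le_max_left _ _,
      (le_max_left _ _).trans (le_max_right _ _),
      ((le_max_left _ _).trans (le_max_right _ _)).trans (le_max_right _ _),
      (((le_max_left _ _).trans (le_max_right _ _)).trans (le_max_right _ _)).trans (le_max_right _ _),
      ((((le_max_right _ _).trans (le_max_right _ _)).trans (le_max_right _ _)).trans (le_max_right _ _))⟩
  have hΛpos : (0:ℝ) < Λ := lt_of_lt_of_le one_pos hΛ1
  have hqΛ : 0 < q Λ := by
    have p2 : 0 < Λ + r₂ := by linarith
    have p3 : 0 < Λ + r₃ := by linarith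
    have p4 : 0 < Λ + r₄ := by linarith
    have e2 : Λ + r₂ ≤ 2*Λ := by linarith
    have e3 : Λ + r₃ ≤ 2*Λ := by linarith
    have e4 : Λ + r₄ ≤ 2*Λ := by linarith
    have hΛ3' : Λ ≤ Λ^3 := by nlinarith [sq_nonneg Λ, sq_nonneg (Λ-1)]
    have hΛsq : Λ^2 ≤ Λ^3 := by nlinarith [sq_nonneg Λ]
    have t1 : (Λ+r₂)*(Λ+r₃)*(Λ+r₄) ≤ 8*Λ^3 := by
      calc (Λ+r₂)*(Λ+r₃)*(Λ+r₄) ≤ (2*Λ)*(2*Λ)*(2*Λ) :=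
            mul_le_mul (mul_le_mul e2 e3 p3.le (by linarith)) e4 p4.le (by positivity)
        _ = 8*Λ^3 := by ring
    have t2 : (Λ+r₃)*(Λ+r₄) ≤ 8*Λ^3 := by
      calc (Λ+r₃)*(Λ+r₄) ≤ (2*Λ)*(2*Λ) := mul_le_mul e3 e4 p4.le (by linarith)
        _ = 4*Λ^2 := by ring
        _ ≤ 8*Λ^3 := by linarith
    have t3 : (Λ+r₂)*(Λ+r₄) ≤ 8*Λ^3 := by
      calc (Λ+r₂)*(Λ+r₄) ≤ (2*Λ)*(2*Λ) := mul_le_mul e2 e4 p4.le (by linarith)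
        _ = 4*Λ^2 := by ring
        _ ≤ 8*Λ^3 := by linarith
    have t4 : Λ+r₃ ≤ 8*Λ^3 := by linarith
    have t5 : Λ+r₂ ≤ 8*Λ^3 := by linarith
    have hsum : α*(Λ+r₂)*(Λ+r₃)*(Λ+r₄) + β*ε*(Λ+r₃)*(Λ+r₄) + γ*ζ*(Λ+r₂)*(Λ+r₄)
        + δ*(η*ε*(Λ+r₃) + ζ*θ*(Λ+r₂)) ≤ (α+β*ε+γ*ζ+δ*(η*ε+ζ*θ))*(8*Λ^3) := by
      have m1 := mul_le_mul_of_nonneg_left t1 hα.le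
      have m2 := mul_le_mul_of_nonneg_left t2 (mul_pos hβ hε).le
      have m3 := mul_le_mul_of_nonneg_left t3 (mul_pos hγ hζ).le
      have m4 := mul_le_mul_of_nonneg_left t4 (mul_pos hη hε).le
      have m5 := mul_le_mul_of_nonneg_left t5 (mul_pos hζ hθ).le
      have m6 := mul_le_mul_of_nonneg_left (add_le_add m4 m5) hδ.le
      linarith [m1, m2, m3, m6]
    have hS8 : Sb*(α*(Λ+r₂)*(Λ+r₃)*(Λ+r₄) + β*ε*(Λ+r₃)*(Λ+r₄) + γ*ζ*(Λ+r₂)*(Λ+r₄)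
        + δ*(η*ε*(Λ+r₃) + ζ*θ*(Λ+r₂))) ≤ 8*K*Λ^3 := by
      have hh := mul_le_mul_of_nonneg_left hsum hSb.le
      rw [hK]; linarith [hh]
    have hfour : Λ^4 ≤ (Λ+r₁)*(Λ+r₂)*(Λ+r₃)*(Λ+r₄) := by
      have b1 : Λ ≤ Λ + r₁ := by linarith
      have b2 : Λ ≤ Λ + r₂ := by linarith
      have b3 : Λ ≤ Λ + r₃ := by linarith
      have b4 : Λ ≤ Λ + r₄ := by linarith
      calc Λ^4 = Λ*Λ*Λ*Λ := by ring
        _ ≤ (Λ+r₁)*(Λ+r₂)*(Λ+r₃)*(Λ+r₄) := by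
            apply mul_le_mul _ b4 hΛpos.le (by positivity)
            apply mul_le_mul _ b3 hΛpos.le (by positivity)
            exact mul_le_mul b1 b2 hΛpos.le (by linarith)
    have hmain : (8*K+1)*Λ^3 ≤ Λ^4 := by
      have hh := mul_le_mul_of_nonneg_right hΛK (pow_pos hΛpos 3).le
      have : Λ * Λ^3 = Λ^4 := by ring
      linarith
    have hqval : q Λ = (Λ+r₁)*(Λ+r₂)*(Λ+r₃)*(Λ+r₄)
        - Sb*(α*(Λ+r₂)*(Λ+r₃)*(Λ+r₄) + β*ε*(Λ+r₃)*(Λ+r₄) + γ*ζ*(Λ+r₂)*(Λ+r₄)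
          + δ*(η*ε*(Λ+r₃) + ζ*θ*(Λ+r₂))) := by rw [hqdef]
    rw [hqval]
    have := pow_pos hΛpos 3
    linarith
  have hqc : Continuous q := by rw [hqdef]; fun_prop
  obtain ⟨l, hlmem, hql⟩ := intermediate_value_Icc hΛpos.le hqc.continuousOn ⟨hq0'.le, hqΛ.le⟩
  refine ⟨l, lt_of_le_of_ne hlmem.1 ?_, hql⟩
  rintro rfl
  exact hq0'.ne hql


open Matrix in
lemma kernel_vec (r₁ r₂ r₃ r₄ r₅ α β γ δ ε ζ η θ μ ν Sb l v1 v2 v3 v4 : ℝ)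
    (h1 : (l+r₂)*v1 = ε) (h2 : (l+r₃)*v2 = ζ)
    (h3 : (l+r₄)*v3 = η*v1 + θ*v2) (h4 : (l+r₅)*v4 = μ*v2 + ν*v3)
    (h0 : l + r₁ = Sb*(α + β*v1 + γ*v2 + δ*v3)) :
    (l • (1 : Matrix (Fin 5) (Fin 5) ℝ) -
      (!![-r₁, 0, 0, 0, 0;
          ε, -r₂, 0, 0, 0;
          ζ, 0, -r₃, 0, 0;
          0, η, θ, -r₄, 0;
          0, 0, μ, ν, -r₅] + Sb • vecMulVec ![1, 0, 0, 0, 0] ![α, β, γ, δ, 0])) *ᵥ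
      ![1, v1, v2, v3, v4] = 0 := by
  rw [Matrix.sub_mulVec, Matrix.add_mulVec, Matrix.smul_mulVec, Matrix.one_mulVec]
  funext i
  fin_cases i <;>
    simp [Matrix.mulVec, dotProduct, Fin.sum_univ_five, Matrix.vecMulVec_apply]
  · linear_combination h0
  · linarith [h1]
  · linarith [h2]
  · linarith [h3]
  · linarith [h4]


set_option maxHeartbeats 1000000 in
set_option maxRecDepth 10000 in
open Matrix Filter in
/-- The limit of the susceptible fraction cannot exceed the stability
threshold S̄* = 1/R₀. -/
theorem susceptible_limit_below_threshold
    (α β γ δ ε ζ lam η ρ θ μ κ ν ξ σ τ : ℝ)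
    (hα : 0 < α) (hβ : 0 < β) (hγ : 0 < γ) (hδ : 0 < δ) (hε : 0 < ε)
    (hζ : 0 < ζ) (hlam : 0 < lam) (hη : 0 < η) (hρ : 0 < ρ) (hθ : 0 < θ)
    (hμ : 0 < μ) (hκ : 0 < κ) (hν : 0 < ν) (hξ : 0 < ξ) (hσ : 0 < σ)
    (hτ : 0 < τ)
    (r₁ r₂ r₃ r₄ r₅ : ℝ)
    (hr₁ : r₁ = ε + ζ + lam) (hr₂ : r₂ = η + ρ) (hr₃ : r₃ = θ + μ + κ)
    (hr₄ : r₄ = ν + ξ) (hr₅ : r₅ = σ + τ)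
    (F : Matrix (Fin 5) (Fin 5) ℝ)
    (hF : F = !![-r₁, 0, 0, 0, 0;
                 ε, -r₂, 0, 0, 0;
                 ζ, 0, -r₃, 0, 0;
                 0, η, θ, -r₄, 0;
                 0, 0, μ, ν, -r₅])
    (b c : Fin 5 → ℝ)
    (hb : b = ![1, 0, 0, 0, 0]) (hc : c = ![α, β, γ, δ, 0])
    (x : ℝ → Fin 5 → ℝ) (S : ℝ → ℝ)
    (hx : ∀ t i, HasDerivAt (fun t => x t i)
      ((F *ᵥ x t) i + b i * (S t * (c ⬝ᵥ x t))) t)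
    (hS : ∀ t, HasDerivAt S (-(S t) * (c ⬝ᵥ x t)) t)
    (hSanti : ∀ s t : ℝ, s ≤ t → S t ≤ S s)
    (hSnn : ∀ t, 0 ≤ S t)
    (hxnn : ∀ t i, 0 ≤ x t i)
    (hx0 : ∀ i, 0 < x 0 i)
    (Sbar : ℝ) (hSlim : Tendsto S atTop (nhds Sbar))
    (hunstable : (∃ z ∈ spectrum ℂ ((F + Sbar • vecMulVec b c).map (Complex.ofReal)),
        0 < z.re) → ¬ Tendsto x atTop (nhds 0)) :
    Sbar ≤ r₁ * r₂ * r₃ * r₄ /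
      (α * r₂ * r₃ * r₄ + β * ε * r₃ * r₄ + γ * ζ * r₂ * r₄
        + δ * (η * ε * r₃ + ζ * θ * r₂)) := by
  by_contra hcon
  push_neg at hcon
  have hr₁p : 0 < r₁ := by rw [hr₁]; linarith
  have hr₂p : 0 < r₂ := by rw [hr₂]; linarith
  have hr₃p : 0 < r₃ := by rw [hr₃]; linarith
  have hr₄p : 0 < r₄ := by rw [hr₄]; linarith
  have hr₅p : 0 < r₅ := by rw [hr₅]; linarith
  have hD : 0 < α * r₂ * r₃ * r₄ + β * ε * r₃ * r₄ + γ * ζ * r₂ * r₄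
      + δ * (η * ε * r₃ + ζ * θ * r₂) := by positivity
  have hSbarpos : 0 < Sbar := lt_trans (by positivity) hcon
  have hq0 : r₁ * r₂ * r₃ * r₄ - Sbar * (α * r₂ * r₃ * r₄ + β * ε * r₃ * r₄
      + γ * ζ * r₂ * r₄ + δ * (η * ε * r₃ + ζ * θ * r₂)) < 0 := by
    have := (div_lt_iff₀ hD).mp hcon
    nlinarith
  -- continuity facts
  have hxc : ∀ i, Continuous fun t => x t i := fun i =>
    continuous_iff_continuousAt.2 fun t => (hx t i).differentiableAt.continuousAt
  have hSc : Continuous S :=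
    continuous_iff_continuousAt.2 fun t => (hS t).differentiableAt.continuousAt
  have hcx_eq : ∀ t, c ⬝ᵥ x t = α * x t 0 + β * x t 1 + γ * x t 2 + δ * x t 3 := by
    intro t
    simp [hc, dotProduct, Fin.sum_univ_five]
  have hcxc : Continuous fun t => c ⬝ᵥ x t := by
    simp only [hcx_eq]
    fun_prop
  have hcxnn : ∀ t, 0 ≤ c ⬝ᵥ x t := by
    intro t
    rw [hcx_eq]
    have h0 := hxnn t 0; have h1 := hxnn t 1; have h2 := hxnn t 2; have h3 := hxnn t 3
    positivity
  have hSbarle : ∀ t, Sbar ≤ S t := fun t =>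
    le_of_tendsto hSlim (eventually_atTop.2 ⟨t, fun u hu => hSanti t u hu⟩)
  -- FTC for S
  have hSint : ∀ T : ℝ, 0 ≤ T →
      (∫ s in (0:ℝ)..T, S s * (c ⬝ᵥ x s)) = S 0 - S T := by
    intro T hT
    have h1 : (∫ s in (0:ℝ)..T, -(S s * (c ⬝ᵥ x s))) = S T - S 0 :=
      intervalIntegral.integral_eq_sub_of_hasDerivAt
        (fun t _ => by simpa [neg_mul] using hS t)
        (((hSc.mul hcxc).neg).intervalIntegrable 0 T)
    rw [intervalIntegral.integral_neg] at h1
    linarith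
  set Cb := (S 0 - Sbar) / Sbar with hCb
  -- bound on ∫ cx
  have hcxint : ∀ T : ℝ, 0 ≤ T → (∫ s in (0:ℝ)..T, c ⬝ᵥ x s) ≤ Cb := by
    intro T hT
    have h2 : Sbar * ∫ s in (0:ℝ)..T, c ⬝ᵥ x s ≤ S 0 - S T := by
      rw [← intervalIntegral.integral_const_mul, ← hSint T hT]
      apply intervalIntegral.integral_mono_on hT
        ((continuous_const.mul hcxc).intervalIntegrable 0 T)
        ((hSc.mul hcxc).intervalIntegrable 0 T)
      intro s _
      exact mul_le_mul_of_nonneg_right (hSbarle s) (hcxnn s)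
    have h3 : S T ≥ Sbar := hSbarle T
    rw [hCb, le_div_iff₀ hSbarpos]
    nlinarith
  -- per-coordinate integral bounds
  have hcoord : ∀ (i : Fin 5) (coef : ℝ), 0 < coef → (∀ t, coef * x t i ≤ c ⬝ᵥ x t) →
      ∀ T : ℝ, 0 ≤ T → (∫ s in (0:ℝ)..T, x s i) ≤ Cb / coef := by
    intro i coef hcoef hle T hT
    rw [le_div_iff₀ hcoef, mul_comm, ← intervalIntegral.integral_const_mul]
    refine le_trans ?_ (hcxint T hT)
    apply intervalIntegral.integral_mono_on hT
      ((continuous_const.mul (hxc i)).intervalIntegrable 0 T)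
      (hcxc.intervalIntegrable 0 T)
    exact fun s _ => hle s
  have hb0 : ∀ T : ℝ, 0 ≤ T → (∫ s in (0:ℝ)..T, x s 0) ≤ Cb / α :=
    hcoord 0 α hα fun t => by
      rw [hcx_eq]
      have h1 := hxnn t 1; have h2 := hxnn t 2; have h3 := hxnn t 3
      nlinarith
  have hb1 : ∀ T : ℝ, 0 ≤ T → (∫ s in (0:ℝ)..T, x s 1) ≤ Cb / β :=
    hcoord 1 β hβ fun t => by
      rw [hcx_eq]
      have h1 := hxnn t 0; have h2 := hxnn t 2; have h3 := hxnn t 3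
      nlinarith
  have hb2 : ∀ T : ℝ, 0 ≤ T → (∫ s in (0:ℝ)..T, x s 2) ≤ Cb / γ :=
    hcoord 2 γ hγ fun t => by
      rw [hcx_eq]
      have h1 := hxnn t 0; have h2 := hxnn t 1; have h3 := hxnn t 3
      nlinarith
  have hb3 : ∀ T : ℝ, 0 ≤ T → (∫ s in (0:ℝ)..T, x s 3) ≤ Cb / δ :=
    hcoord 3 δ hδ fun t => by
      rw [hcx_eq]
      have h1 := hxnn t 0; have h2 := hxnn t 1; have h3 := hxnn t 2
      nlinarith
  -- derivatives in explicit form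
  have hd0 : ∀ t, HasDerivAt (fun t => x t 0)
      (-r₁ * x t 0 + S t * (c ⬝ᵥ x t)) t := by
    intro t
    have h := hx t 0
    have he : (F *ᵥ x t) 0 + b 0 * (S t * (c ⬝ᵥ x t))
        = -r₁ * x t 0 + S t * (c ⬝ᵥ x t) := by
      simp [hF, hb, Matrix.mulVec, dotProduct, Fin.sum_univ_five]
    rwa [he] at h
  have hd1 : ∀ t, HasDerivAt (fun t => x t 1)
      (-r₂ * x t 1 + ε * x t 0) t := by
    intro t
    have h := hx t 1
    have he : (F *ᵥ x t) 1 + b 1 * (S t * (c ⬝ᵥ x t))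
        = -r₂ * x t 1 + ε * x t 0 := by
      simp [hF, hb, Matrix.mulVec, dotProduct, Fin.sum_univ_five]
      ring
    rwa [he] at h
  have hd2 : ∀ t, HasDerivAt (fun t => x t 2)
      (-r₃ * x t 2 + ζ * x t 0) t := by
    intro t
    have h := hx t 2
    have he : (F *ᵥ x t) 2 + b 2 * (S t * (c ⬝ᵥ x t))
        = -r₃ * x t 2 + ζ * x t 0 := by
      simp [hF, hb, Matrix.mulVec, dotProduct, Fin.sum_univ_five]
      ring
    rwa [he] at h
  have hd3 : ∀ t, HasDerivAt (fun t => x t 3)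
      (-r₄ * x t 3 + (η * x t 1 + θ * x t 2)) t := by
    intro t
    have h := hx t 3
    have he : (F *ᵥ x t) 3 + b 3 * (S t * (c ⬝ᵥ x t))
        = -r₄ * x t 3 + (η * x t 1 + θ * x t 2) := by
      simp [hF, hb, Matrix.mulVec, dotProduct, Fin.sum_univ_five]
      ring
    rwa [he] at h
  have hd4 : ∀ t, HasDerivAt (fun t => x t 4)
      (-r₅ * x t 4 + (μ * x t 2 + ν * x t 3)) t := by
    intro t
    have h := hx t 4
    have he : (F *ᵥ x t) 4 + b 4 * (S t * (c ⬝ᵥ x t))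
        = -r₅ * x t 4 + (μ * x t 2 + ν * x t 3) := by
      simp [hF, hb, Matrix.mulVec, dotProduct, Fin.sum_univ_five]
      ring
    rwa [he] at h
  -- decay of each coordinate
  have ht0 : Tendsto (fun t => x t 0) atTop (nhds 0) := by
    apply decay_aux r₁ (S 0) hr₁p (fun t => S t * (c ⬝ᵥ x t)) _ (hSc.mul hcxc)
      (fun t => mul_nonneg (hSnn t) (hcxnn t)) hd0 (fun t => hxnn t 0)
    intro T hT
    rw [hSint T hT]
    have := hSnn T
    linarith
  have ht1 : Tendsto (fun t => x t 1) atTop (nhds 0) := by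
    apply decay_aux r₂ (ε * (Cb / α)) hr₂p (fun t => ε * x t 0) _
      (continuous_const.mul (hxc 0))
      (fun t => mul_nonneg hε.le (hxnn t 0)) hd1 (fun t => hxnn t 1)
    intro T hT
    rw [intervalIntegral.integral_const_mul]
    exact mul_le_mul_of_nonneg_left (hb0 T hT) hε.le
  have ht2 : Tendsto (fun t => x t 2) atTop (nhds 0) := by
    apply decay_aux r₃ (ζ * (Cb / α)) hr₃p (fun t => ζ * x t 0) _
      (continuous_const.mul (hxc 0))
      (fun t => mul_nonneg hζ.le (hxnn t 0)) hd2 (fun t => hxnn t 2)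
    intro T hT
    rw [intervalIntegral.integral_const_mul]
    exact mul_le_mul_of_nonneg_left (hb0 T hT) hζ.le
  have ht3 : Tendsto (fun t => x t 3) atTop (nhds 0) := by
    apply decay_aux r₄ (η * (Cb / β) + θ * (Cb / γ)) hr₄p
      (fun t => η * x t 1 + θ * x t 2) _
      ((continuous_const.mul (hxc 1)).add (continuous_const.mul (hxc 2)))
      (fun t => add_nonneg (mul_nonneg hη.le (hxnn t 1)) (mul_nonneg hθ.le (hxnn t 2)))
      hd3 (fun t => hxnn t 3)
    intro T hT
    rw [intervalIntegral.integral_add (f := fun s => η * x s 1) (g := fun s => θ * x s 2) ((continuous_const.mul (hxc 1)).intervalIntegrable 0 T)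
      ((continuous_const.mul (hxc 2)).intervalIntegrable 0 T),
      intervalIntegral.integral_const_mul, intervalIntegral.integral_const_mul]
    have e1 := mul_le_mul_of_nonneg_left (hb1 T hT) hη.le
    have e2 := mul_le_mul_of_nonneg_left (hb2 T hT) hθ.le
    linarith
  have ht4 : Tendsto (fun t => x t 4) atTop (nhds 0) := by
    apply decay_aux r₅ (μ * (Cb / γ) + ν * (Cb / δ)) hr₅p
      (fun t => μ * x t 2 + ν * x t 3) _
      ((continuous_const.mul (hxc 2)).add (continuous_const.mul (hxc 3)))
      (fun t => add_nonneg (mul_nonneg hμ.le (hxnn t 2)) (mul_nonneg hν.le (hxnn t 3)))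
      hd4 (fun t => hxnn t 4)
    intro T hT
    rw [intervalIntegral.integral_add (f := fun s => μ * x s 2) (g := fun s => ν * x s 3) ((continuous_const.mul (hxc 2)).intervalIntegrable 0 T)
      ((continuous_const.mul (hxc 3)).intervalIntegrable 0 T),
      intervalIntegral.integral_const_mul, intervalIntegral.integral_const_mul]
    have e1 := mul_le_mul_of_nonneg_left (hb2 T hT) hμ.le
    have e2 := mul_le_mul_of_nonneg_left (hb3 T hT) hν.le
    linarith
  have hxto0 : Tendsto x atTop (nhds 0) := by
    rw [tendsto_pi_nhds]
    intro i
    fin_cases i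
    · exact ht0
    · exact ht1
    · exact ht2
    · exact ht3
    · exact ht4
  -- the unstable eigenvalue
  refine hunstable ?_ hxto0
  obtain ⟨l, hlpos, hql⟩ := exists_pos_root r₁ r₂ r₃ r₄ α β γ δ ε ζ η θ Sbar
    hr₁p hr₂p hr₃p hr₄p hα hβ hγ hδ hε hζ hη hθ hSbarpos hq0
  have hp2 : (0:ℝ) < l + r₂ := by linarith
  have hp3 : (0:ℝ) < l + r₃ := by linarith
  have hp4 : (0:ℝ) < l + r₄ := by linarith
  have hp5 : (0:ℝ) < l + r₅ := by linarith
  set v1 : ℝ := ε/(l+r₂) with hv1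
  set v2 : ℝ := ζ/(l+r₃) with hv2
  set v3 : ℝ := (η*v1+θ*v2)/(l+r₄) with hv3
  set v4 : ℝ := (μ*v2+ν*v3)/(l+r₅) with hv4
  have h1 : (l+r₂)*v1 = ε := by rw [hv1]; field_simp
  have h2 : (l+r₃)*v2 = ζ := by rw [hv2]; field_simp
  have h3 : (l+r₄)*v3 = η*v1 + θ*v2 := by rw [hv3]; field_simp
  have h4 : (l+r₅)*v4 = μ*v2 + ν*v3 := by rw [hv4]; field_simp
  have h0 : l + r₁ = Sbar*(α + β*v1 + γ*v2 + δ*v3) := by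
    have hcancel : ((l+r₂)*(l+r₃)*(l+r₄)) ≠ 0 := by positivity
    apply mul_left_cancel₀ hcancel
    linear_combination hql - Sbar*β*((l+r₃)*(l+r₄))*h1 - Sbar*γ*((l+r₂)*(l+r₄))*h2
      - Sbar*δ*((l+r₂)*(l+r₃))*h3 - Sbar*δ*η*(l+r₃)*h1 - Sbar*δ*θ*(l+r₂)*h2
  have hAv := kernel_vec r₁ r₂ r₃ r₄ r₅ α β γ δ ε ζ η θ μ ν Sbar l v1 v2 v3 v4 h1 h2 h3 h4 h0
  rw [← hF, ← hb, ← hc] at hAv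
  have hvne : ![1, v1, v2, v3, v4] ≠ 0 := by
    intro h
    have := congrFun h 0
    simp at this
  have hdet : (l • (1:Matrix (Fin 5) (Fin 5) ℝ) - (F + Sbar • vecMulVec b c)).det = 0 :=
    Matrix.exists_mulVec_eq_zero_iff.mp ⟨_, hvne, hAv⟩
  refine ⟨(l:ℂ), spectrum.mem_iff.mpr ?_, by simpa using hlpos⟩
  intro hunit
  have hsm : algebraMap ℂ (Matrix (Fin 5) (Fin 5) ℂ) (l:ℂ)
      - (F + Sbar • vecMulVec b c).map Complex.ofReal
      = (l • (1:Matrix (Fin 5) (Fin 5) ℝ) - (F + Sbar • vecMulVec b c)).map Complex.ofReal := by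
    ext i j
    by_cases hij : i = j <;>
      simp [Matrix.algebraMap_matrix_apply, Matrix.map_apply, Matrix.sub_apply,
        Matrix.smul_apply, Matrix.one_apply, hij]
  rw [hsm, Matrix.isUnit_iff_isUnit_det] at hunit
  have hdet2 : ((l • (1:Matrix (Fin 5) (Fin 5) ℝ)
      - (F + Sbar • vecMulVec b c)).map Complex.ofReal).det
      = Complex.ofReal ((l • (1:Matrix (Fin 5) (Fin 5) ℝ) - (F + Sbar • vecMulVec b c)).det) :=
    (RingHom.map_det Complex.ofRealHom _).symm
  rw [hdet2, hdet] at hunit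
  simp at hunit
end

section
/- For the polynomial p(s) = D(s) - S̄N(s) with 0 < S̄ < S̄* = D(0)/N(0), where D and N have positive coefficients and deg D = 5 > deg N = 4 (after cancelling the common factor (s+r₅), deg 4 > deg 3), every real root of p is negative. -/
/-- For 0 < S̄ < S̄* = D(0)/N(0), p(s) = D(s) - S̄N(s) is positive for all
s ≥ 0, hence p has no nonnegative real roots: every real root is negative. -/
theorem char_poly_no_nonneg_real_roots
    (α β γ δ ε ζ lam η ρ θ μ κ ν ξ : ℝ)
    (hα : 0 < α) (hβ : 0 < β) (hγ : 0 < γ) (hδ : 0 < δ) (hε : 0 < ε)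
    (hζ : 0 < ζ) (hlam : 0 < lam) (hη : 0 < η) (hρ : 0 < ρ) (hθ : 0 < θ)
    (hμ : 0 < μ) (hκ : 0 < κ) (hν : 0 < ν) (hξ : 0 < ξ)
    (r₁ r₂ r₃ r₄ : ℝ)
    (hr₁ : r₁ = ε + ζ + lam) (hr₂ : r₂ = η + ρ) (hr₃ : r₃ = θ + μ + κ)
    (hr₄ : r₄ = ν + ξ)
    (Dp Np p : ℝ → ℝ)
    (hDp : ∀ s, Dp s = (s + r₁) * (s + r₂) * (s + r₃) * (s + r₄))
    (hNp : ∀ s, Np s = α * ((s + r₂) * (s + r₃) * (s + r₄))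
      + β * ε * ((s + r₃) * (s + r₄)) + γ * ζ * ((s + r₂) * (s + r₄))
      + δ * (η * ε * (s + r₃) + ζ * θ * (s + r₂)))
    (Sbar : ℝ) (hSbar0 : 0 < Sbar) (hSbar : Sbar < Dp 0 / Np 0)
    (hp : ∀ s, p s = Dp s - Sbar * Np s) :
    (∀ s, 0 ≤ s → 0 < p s) ∧ ∀ s : ℝ, p s = 0 → s < 0 := by
  have h1 : 0 < r₁ := by rw [hr₁]; positivity
  have h2 : 0 < r₂ := by rw [hr₂]; positivity
  have h3 : 0 < r₃ := by rw [hr₃]; positivity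
  have h4 : 0 < r₄ := by rw [hr₄]; positivity
  -- N(s) > 0 for s ≥ 0
  have hN : ∀ s : ℝ, 0 ≤ s → 0 < Np s := by
    intro s hs
    rw [hNp]
    have a2 : 0 < s + r₂ := by linarith
    have a3 : 0 < s + r₃ := by linarith
    have a4 : 0 < s + r₄ := by linarith
    have t1 : 0 < α * ((s + r₂) * (s + r₃) * (s + r₄)) :=
      mul_pos hα (mul_pos (mul_pos a2 a3) a4)
    have t2 : 0 < β * ε * ((s + r₃) * (s + r₄)) :=
      mul_pos (mul_pos hβ hε) (mul_pos a3 a4)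
    have t3 : 0 < γ * ζ * ((s + r₂) * (s + r₄)) :=
      mul_pos (mul_pos hγ hζ) (mul_pos a2 a4)
    have t4 : 0 < δ * (η * ε * (s + r₃) + ζ * θ * (s + r₂)) :=
      mul_pos hδ (add_pos (mul_pos (mul_pos hη hε) a3) (mul_pos (mul_pos hζ hθ) a2))
    linarith
  have hN0 : 0 < Np 0 := hN 0 le_rfl
  -- key: N(0) D(s) - D(0) N(s) ≥ 0 for s ≥ 0
  have hkey : ∀ s : ℝ, 0 ≤ s → Dp 0 * Np s ≤ Np 0 * Dp s := by
    intro s hs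
    have a1 : 0 < s + r₁ := by linarith
    have a2 : 0 < s + r₂ := by linarith
    have a3 : 0 < s + r₃ := by linarith
    have a4 : 0 < s + r₄ := by linarith
    have e1 : 0 ≤ α * (r₂ * r₃ * r₄) * (s * ((s + r₂) * (s + r₃) * (s + r₄))) :=
      mul_nonneg (by positivity) (mul_nonneg hs (mul_pos (mul_pos a2 a3) a4).le)
    have e2 : 0 ≤ β * ε * (r₃ * r₄) * (((s + r₃) * (s + r₄)) * (s * s + s * (r₁ + r₂))) := by
      apply mul_nonneg (by positivity)
      apply mul_nonneg (mul_pos a3 a4).le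
      exact add_nonneg (mul_nonneg hs hs) (mul_nonneg hs (by linarith))
    have e3 : 0 ≤ γ * ζ * (r₂ * r₄) * (((s + r₂) * (s + r₄)) * (s * s + s * (r₁ + r₃))) := by
      apply mul_nonneg (by positivity)
      apply mul_nonneg (mul_pos a2 a4).le
      exact add_nonneg (mul_nonneg hs hs) (mul_nonneg hs (by linarith))
    have e4 : 0 ≤ δ * (η * ε) * r₃ * ((s + r₃) * ((s + r₁) * (s + r₂) * (s + r₄) - r₁ * r₂ * r₄)) := by
      apply mul_nonneg (by positivity)
      apply mul_nonneg a3.le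
      have t : r₁ * r₂ ≤ (s + r₁) * (s + r₂) :=
        mul_le_mul (by linarith) (by linarith) h2.le (by linarith)
      have t2 : r₁ * r₂ * r₄ ≤ (s + r₁) * (s + r₂) * (s + r₄) :=
        mul_le_mul t (by linarith) h4.le (by positivity)
      linarith
    have e5 : 0 ≤ δ * (ζ * θ) * r₂ * ((s + r₂) * ((s + r₁) * (s + r₃) * (s + r₄) - r₁ * r₃ * r₄)) := by
      apply mul_nonneg (by positivity)
      apply mul_nonneg a2.le
      have t : r₁ * r₃ ≤ (s + r₁) * (s + r₃) :=
        mul_le_mul (by linarith) (by linarith) h3.le (by linarith)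
      have t2 : r₁ * r₃ * r₄ ≤ (s + r₁) * (s + r₃) * (s + r₄) :=
        mul_le_mul t (by linarith) h4.le (by positivity)
      linarith
    have hid : Np 0 * Dp s - Dp 0 * Np s =
        α * (r₂ * r₃ * r₄) * (s * ((s + r₂) * (s + r₃) * (s + r₄)))
        + β * ε * (r₃ * r₄) * (((s + r₃) * (s + r₄)) * (s * s + s * (r₁ + r₂)))
        + γ * ζ * (r₂ * r₄) * (((s + r₂) * (s + r₄)) * (s * s + s * (r₁ + r₃)))
        + δ * (η * ε) * r₃ * ((s + r₃) * ((s + r₁) * (s + r₂) * (s + r₄) - r₁ * r₂ * r₄))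
        + δ * (ζ * θ) * r₂ * ((s + r₂) * ((s + r₁) * (s + r₃) * (s + r₄) - r₁ * r₃ * r₄)) := by
      rw [hDp, hNp, hDp, hNp]; ring
    linarith [hid]
  have hpos : ∀ s, 0 ≤ s → 0 < p s := by
    intro s hs
    have hNs := hN s hs
    have hlt : Sbar * Np s < (Dp 0 / Np 0) * Np s :=
      mul_lt_mul_of_pos_right hSbar hNs
    have hle : (Dp 0 / Np 0) * Np s ≤ Dp s := by
      rw [div_mul_eq_mul_div, div_le_iff₀ hN0]
      calc Dp 0 * Np s ≤ Np 0 * Dp s := hkey s hs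
        _ = Dp s * Np 0 := by ring
    rw [hp]
    linarith
  refine ⟨hpos, fun s hso => ?_⟩
  by_contra h
  push_neg at h
  have := hpos s h
  linarith
end
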